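/- arXiv:1410.1697 — 4 statements merged into one kernel-verified Lean document; each statement's English description precedes it below -/
import Mathlib

section
/- Let A be a commutative unital complex Banach algebra with a maximal ideal M algebraically generated by t_1,…,t_k, with dim_ℂ(cl(M^n)/cl(M^{n+1})) = C(n+k−1,n) for every n ≥ 1, and let φ be a character of A with ker φ = M. Then for every x ∈ ⋂_{n≥1} cl(M^n) there is a neighbourhood U of φ in the character space M(A) (Gelfand topology) such that ψ(x) = 0 for all ψ ∈ U, i.e., the Gelfand transform x̂ vanishes on a neighbourhood of φ. -/
/-- The closure of the `n`-th power of an ideal, viewed as a `ℂ`-submodule. -/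
def idealPowClosure {A : Type*} [CommRing A] [Algebra ℂ A] [TopologicalSpace A]
    [ContinuousAdd A] [ContinuousConstSMul ℂ A] (M : Ideal A) (n : ℕ) : Submodule ℂ A :=
  ((M ^ n).restrictScalars ℂ).topologicalClosure

namespace Lemma31Aux

open Submodule Set Finset Pointwise

/-- The monomial in `t` attached to a multiset of indices. -/
def symProd {A : Type*} [CommMonoid A] {k n : ℕ} (t : Fin k → A) (σ : Sym (Fin k) n) : A :=
  (σ.val.map t).prod

theorem multiset_prod_mem_pow {R : Type*} [CommRing R] (M : Ideal R) (s : Multiset R)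
    (h : ∀ a ∈ s, a ∈ M) : s.prod ∈ M ^ Multiset.card s := by
  induction s using Multiset.induction_on with
  | empty => simp [Ideal.one_eq_top]
  | cons a s ih =>
    rw [Multiset.prod_cons, Multiset.card_cons, pow_succ, mul_comm a s.prod]
    exact Ideal.mul_mem_mul (ih fun b hb => h b (Multiset.mem_cons_of_mem hb))
      (h a (Multiset.mem_cons_self a s))

theorem symProd_mem_pow {R : Type*} [CommRing R] {k n : ℕ} (t : Fin k → R) (M : Ideal R)
    (ht : ∀ i, t i ∈ M) (σ : Sym (Fin k) n) : symProd t σ ∈ M ^ n := by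
  have h := multiset_prod_mem_pow M (σ.val.map t) ?_
  · rwa [Multiset.card_map, σ.property] at h
  · intro a ha
    obtain ⟨i, _, rfl⟩ := Multiset.mem_map.mp ha
    exact ht i

theorem symProd_cons {A : Type*} [CommMonoid A] {k n : ℕ} (t : Fin k → A) (i : Fin k)
    (σ : Sym (Fin k) n) : symProd t (i ::ₛ σ) = symProd t σ * t i := by
  simp [symProd, Sym.cons, mul_comm]

theorem pow_le_span_symProd {R : Type*} [CommRing R] {k : ℕ} (t : Fin k → R) (M : Ideal R)
    (hgen : M = Ideal.span (Set.range t)) (n : ℕ) :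
    M ^ n ≤ Ideal.span (Set.range (symProd t (n := n))) := by
  induction n with
  | zero =>
    have h1 : (1 : R) ∈ Ideal.span (Set.range (symProd t (n := 0))) := by
      apply Ideal.subset_span
      exact ⟨⟨0, rfl⟩, by simp [symProd]⟩
    rw [pow_zero, Ideal.one_eq_top, Ideal.eq_top_iff_one _ |>.mpr h1]
  | succ n ih =>
    rw [pow_succ]
    calc M ^ n * M ≤ Ideal.span (Set.range (symProd t (n := n))) * Ideal.span (Set.range t) :=
          Ideal.mul_mono ih (le_of_eq hgen)
      _ = Ideal.span (Set.range (symProd t (n := n)) * Set.range t) := Ideal.span_mul_span' _ _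
      _ ≤ Ideal.span (Set.range (symProd t (n := n + 1))) := by
          apply Ideal.span_mono
          rintro u ⟨a, ⟨σ, rfl⟩, b, ⟨i, rfl⟩, rfl⟩
          exact ⟨i ::ₛ σ, (symProd_cons t i σ)⟩

theorem exists_decomp_pow {R : Type*} [CommRing R] {k n : ℕ} (t : Fin k → R) (M : Ideal R)
    (hgen : M = Ideal.span (Set.range t)) {y : R} (hy : y ∈ M ^ n) :
    ∃ a : Sym (Fin k) n → R, y = ∑ σ : Sym (Fin k) n, a σ * symProd t σ := by
  have h := pow_le_span_symProd t M hgen n hy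
  rw [Ideal.span, Submodule.mem_span_range_iff_exists_fun] at h
  obtain ⟨c, hc⟩ := h
  exact ⟨c, by simpa [smul_eq_mul] using hc.symm⟩

theorem isClosed_fd_sup {E : Type*} [NormedAddCommGroup E] [NormedSpace ℂ E]
    (F N : Submodule ℂ E) [FiniteDimensional ℂ F] (hN : IsClosed (N : Set E)) :
    IsClosed ((F ⊔ N : Submodule ℂ E) : Set E) := by
  haveI := hN
  have hcont : Continuous N.mkQ := by
    apply AddMonoidHomClass.continuous_of_bound N.mkQ 1
    intro m
    rw [one_mul]
    exact Submodule.Quotient.norm_mk_le N m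
  haveI : FiniteDimensional ℂ (F.map N.mkQ) := Module.Finite.map F N.mkQ
  have hclosed : IsClosed ((F.map N.mkQ : Submodule ℂ (E ⧸ N)) : Set (E ⧸ N)) :=
    Submodule.closed_of_finiteDimensional _
  have heq : (F ⊔ N : Submodule ℂ E) = (F.map N.mkQ).comap N.mkQ := by
    rw [Submodule.comap_map_mkQ, sup_comm]
  rw [heq]
  exact hclosed.preimage hcont

variable {A : Type*} [NormedCommRing A] [NormedAlgebra ℂ A] [CompleteSpace A]

set_option maxHeartbeats 1000000 in
/-- The key independence statement: the images of the degree-`n` monomials in the generators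
are linearly independent modulo `cl(M^{n+1})`. -/
theorem indep {k : ℕ} (t : Fin k → A) (M : Ideal A)
    (hgen : M = Ideal.span (Set.range t))
    (φ : WeakDual.characterSpace ℂ A) (hφ : ∀ x : A, φ x = 0 ↔ x ∈ M)
    (n : ℕ)
    (hrank : Module.rank ℂ
        (↥(idealPowClosure M n) ⧸
          Submodule.comap (idealPowClosure M n).subtype (idealPowClosure M (n + 1)))
        = ((n + k - 1).choose n : Cardinal))
    (p : Sym (Fin k) n → ℂ)
    (hp : (∑ σ : Sym (Fin k) n, p σ • symProd t σ) ∈ idealPowClosure M (n + 1)) :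
    ∀ σ, p σ = 0 := by
  classical
  by_contra hcon
  push_neg at hcon
  obtain ⟨σ₀, hσ₀⟩ := hcon
  set Nn : Submodule ℂ A := idealPowClosure M n with hNn
  set N' : Submodule ℂ A := idealPowClosure M (n + 1) with hN'
  have hN'closed : IsClosed (N' : Set A) := Submodule.isClosed_topologicalClosure _
  have ht : ∀ i, t i ∈ M := fun i => hgen ▸ Ideal.subset_span ⟨i, rfl⟩
  -- the span of the monomials other than σ₀
  set F₀ : Submodule ℂ A :=
    Submodule.span ℂ (Set.range fun σ : {σ : Sym (Fin k) n // σ ≠ σ₀} => symProd t σ.1) with hF₀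
  haveI : FiniteDimensional ℂ F₀ :=
    FiniteDimensional.span_of_finite ℂ (Set.finite_range _)
  set Z : Submodule ℂ A := F₀ ⊔ N' with hZ
  have hZclosed : IsClosed (Z : Set A) := isClosed_fd_sup F₀ N' hN'closed
  -- every monomial of degree n lies in Z
  have hsymZ : ∀ σ : Sym (Fin k) n, symProd t σ ∈ Z := by
    intro σ
    by_cases hσ : σ = σ₀
    · subst hσ
      have hf : (∑ σ' : Sym (Fin k) n, p σ' • symProd t σ') ∈ Z := le_sup_right (α := Submodule ℂ A) hp
      have hrest : (∑ σ' ∈ Finset.univ.erase σ, p σ' • symProd t σ') ∈ Z := by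
        apply Submodule.sum_mem
        intro σ' hσ'
        have hne : σ' ≠ σ := (Finset.mem_erase.mp hσ').1
        exact Submodule.smul_mem _ _ (le_sup_left (α := Submodule ℂ A)
          (Submodule.subset_span ⟨⟨σ', hne⟩, rfl⟩))
      have hsum : (∑ σ' : Sym (Fin k) n, p σ' • symProd t σ')
          = p σ • symProd t σ + ∑ σ' ∈ Finset.univ.erase σ, p σ' • symProd t σ' := by
        rw [← Finset.sum_erase_add _ _ (Finset.mem_univ σ), add_comm]
      have : p σ • symProd t σ ∈ Z := by
        have := Submodule.sub_mem Z hf hrest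
        rwa [hsum, add_sub_cancel_right] at this
      have h2 := Submodule.smul_mem Z (p σ)⁻¹ this
      rwa [smul_smul, inv_mul_cancel₀ hσ₀, one_smul] at h2
    · exact le_sup_left (α := Submodule ℂ A) (Submodule.subset_span ⟨⟨σ, hσ⟩, rfl⟩)
  -- M^n ⊆ Z
  have hpowZ : ((M ^ n).restrictScalars ℂ : Submodule ℂ A) ≤ Z := by
    intro y hy
    obtain ⟨a, rfl⟩ := exists_decomp_pow t M hgen (Submodule.restrictScalars_mem ℂ _ _ |>.mp hy)
    apply Submodule.sum_mem
    intro σ _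
    -- a σ * symProd t σ = φ(a σ) • symProd t σ + (a σ - φ(a σ) • 1) * symProd t σ
    have hsplit : a σ * symProd t σ
        = φ (a σ) • symProd t σ + (a σ - φ (a σ) • (1 : A)) * symProd t σ := by
      rw [sub_mul, smul_mul_assoc, one_mul]
      abel
    rw [hsplit]
    apply Submodule.add_mem
    · exact Submodule.smul_mem _ _ (hsymZ σ)
    · -- this term is in M^{n+1} ⊆ N' ⊆ Z
      have hmem : (a σ - φ (a σ) • (1 : A)) ∈ M := by
        rw [← hφ]
        have : φ ((φ (a σ)) • (1 : A)) = φ (a σ) := by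
          rw [map_smul, map_one, smul_eq_mul, mul_one]
        rw [map_sub, this, sub_self]
      have : (a σ - φ (a σ) • (1 : A)) * symProd t σ ∈ M ^ (n + 1) := by
        rw [pow_succ, mul_comm (a σ - φ (a σ) • (1 : A)) (symProd t σ)]
        exact Ideal.mul_mem_mul (symProd_mem_pow t M ht σ) hmem
      exact le_sup_right (α := Submodule ℂ A)
        (Submodule.le_topologicalClosure _ (Submodule.restrictScalars_mem ℂ _ _ |>.mpr this))
  have hNnZ : Nn ≤ Z := Submodule.topologicalClosure_minimal _ hpowZ hZclosed
  -- now bound the rank of the quotient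
  set S : Submodule ℂ ↥Nn := Submodule.comap Nn.subtype N' with hS
  set Q := (↥Nn ⧸ S) with hQ
  have hsymNn : ∀ σ : Sym (Fin k) n, symProd t σ ∈ Nn := fun σ =>
    Submodule.le_topologicalClosure _
      (Submodule.restrictScalars_mem ℂ _ _ |>.mpr (symProd_mem_pow t M ht σ))
  set q : {σ : Sym (Fin k) n // σ ≠ σ₀} → Q :=
    fun σ => S.mkQ (⟨symProd t σ.1, hsymNn σ.1⟩ : ↥Nn) with hq
  have hspan : (⊤ : Submodule ℂ Q) ≤ Submodule.span ℂ (Set.range q) := by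
    rintro z -
    obtain ⟨y, rfl⟩ := Submodule.mkQ_surjective S z
    have hyZ : (y : A) ∈ Z := hNnZ y.2
    rw [hZ, Submodule.mem_sup] at hyZ
    obtain ⟨f, hf, gg, hg, hfg⟩ := hyZ
    rw [hF₀, Submodule.mem_span_range_iff_exists_fun] at hf
    obtain ⟨c, hc⟩ := hf
    have hfNn : f ∈ Nn := by
      have hmem : (∑ σ : {σ : Sym (Fin k) n // σ ≠ σ₀}, c σ • symProd t σ.1) ∈ Nn :=
        Submodule.sum_mem _ fun σ _ => Submodule.smul_mem _ _ (hsymNn σ.1)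
      rwa [hc] at hmem
    have hggNn : gg ∈ Nn := by
      have h1 : gg = (y : A) - f := by rw [← hfg]; ring
      rw [h1]
      exact Submodule.sub_mem _ y.2 hfNn
    have hy' : y = (⟨f, hfNn⟩ : ↥Nn) + (⟨gg, hggNn⟩ : ↥Nn) := by
      apply Subtype.ext
      simp [hfg]
    have hfj : (⟨f, hfNn⟩ : ↥Nn)
        = ∑ σ : {σ : Sym (Fin k) n // σ ≠ σ₀}, c σ • (⟨symProd t σ.1, hsymNn σ.1⟩ : ↥Nn) := by
      apply Subtype.ext
      rw [AddSubmonoidClass.coe_finset_sum]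
      simp only [SetLike.val_smul]
      exact hc.symm
    have hq0 : S.mkQ (⟨gg, hggNn⟩ : ↥Nn) = 0 := by
      rw [Submodule.mkQ_apply, Submodule.Quotient.mk_eq_zero]
      exact hg
    rw [hy', map_add, hq0, add_zero, hfj, map_sum]
    simp only [map_smul]
    exact Submodule.sum_mem _ fun σ _ => Submodule.smul_mem _ _
      (Submodule.subset_span ⟨σ, rfl⟩)
  -- rank computation
  have hD : ((n + k - 1).choose n : Cardinal)
      = (Fintype.card (Sym (Fin k) n) : Cardinal) := by
    rw [Sym.card_sym_eq_choose, Fintype.card_fin, Nat.add_comm k n]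
  haveI : Fintype (Set.range q) := (Set.finite_range q).fintype
  have hle : (Fintype.card (Sym (Fin k) n) : Cardinal)
      ≤ (Fintype.card {σ : Sym (Fin k) n // σ ≠ σ₀} : Cardinal) := by
    calc (Fintype.card (Sym (Fin k) n) : Cardinal)
        = Module.rank ℂ Q := by rw [hrank, hD]
      _ = Module.rank ℂ (⊤ : Submodule ℂ Q) := (rank_top ℂ Q).symm
      _ ≤ Module.rank ℂ (Submodule.span ℂ (Set.range q)) := by
          exact Submodule.rank_mono hspan
      _ ≤ Cardinal.mk (Set.range q) := rank_span_le _
      _ = (Fintype.card (Set.range q) : Cardinal) := Cardinal.mk_fintype _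
      _ ≤ (Fintype.card {σ : Sym (Fin k) n // σ ≠ σ₀} : Cardinal) :=
          Nat.cast_le.mpr (Fintype.card_range_le q)
  have hcard : Fintype.card {σ : Sym (Fin k) n // σ ≠ σ₀} < Fintype.card (Sym (Fin k) n) := by
    have := Fintype.card_subtype_lt (p := fun σ : Sym (Fin k) n => σ ≠ σ₀) (x := σ₀) (by simp)
    exact this
  rw [Nat.cast_le] at hle
  omega


/-- The recursively-constructed remainder family. -/
noncomputable def Efam {A : Type*} [NormedCommRing A] {k : ℕ}
    (red : A → A) (g : A → Fin k → A) (x : A) : (N : ℕ) → (Fin N → Fin k) → A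
  | 0, _ => x
  | (N + 1), w => red (g (Efam red g x N (w ∘ Fin.succ)) (w 0))

/-- The monomial attached to a word. -/
noncomputable def Pfam {A : Type*} [NormedCommRing A] {k : ℕ}
    (t : Fin k → A) (N : ℕ) (w : Fin N → Fin k) : A := ∏ i, t (w i)

end Lemma31Aux


open Lemma31Aux in
set_option maxHeartbeats 2000000 in
/-- Lemma 3.1(iii): if a commutative unital complex Banach algebra `A` has a maximal ideal `M`
algebraically generated by `t₁, …, t_k` with `dim (cl(Mⁿ)/cl(Mⁿ⁺¹)) = C(n+k-1, n)` for all
`n ≥ 1`, and `φ` is a character with `ker φ = M`, then for every `x ∈ ⋂_{n≥1} cl(Mⁿ)` the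
Gelfand transform `x̂` vanishes on a neighbourhood of `φ` in the character space. -/
theorem banach_lemma31_part_iii
    {A : Type*} [NormedCommRing A] [NormedAlgebra ℂ A] [CompleteSpace A]
    (k : ℕ) (t : Fin k → A) (M : Ideal A) (hmax : M.IsMaximal)
    (hgen : M = Ideal.span (Set.range t))
    (hdim : ∀ n : ℕ, 1 ≤ n →
      Module.rank ℂ
        (↥(idealPowClosure M n) ⧸
          Submodule.comap (idealPowClosure M n).subtype (idealPowClosure M (n + 1)))
        = ((n + k - 1).choose n : Cardinal))
    (φ : WeakDual.characterSpace ℂ A) (hφ : ∀ x : A, φ x = 0 ↔ x ∈ M) :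
    ∀ x : A, (∀ n : ℕ, 1 ≤ n → x ∈ closure ((M ^ n : Ideal A) : Set A)) →
      ∃ U ∈ nhds φ, ∀ ψ ∈ U, (ψ : WeakDual.characterSpace ℂ A) x = 0 := by
  classical
  intro x hx
  have ht : ∀ i, t i ∈ M := fun i => hgen ▸ Ideal.subset_span ⟨i, rfl⟩
  -- M is closed
  have hMclosed : IsClosed ((M : Set A)) := by
    have : (M : Set A) = (fun a => φ a) ⁻¹' {0} := by
      ext a
      simp [Set.mem_preimage, hφ a]
    rw [this]
    exact isClosed_singleton.preimage (map_continuous φ)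
  have hxM : x ∈ M := by
    have h1 := hx 1 le_rfl
    rw [pow_one] at h1
    rwa [hMclosed.closure_eq] at h1
  -- the closed subspace K = M and the Banach-space surjection onto it
  set K : Submodule ℂ A := M.restrictScalars ℂ with hK
  have hKclosed : IsClosed ((K : Set A)) := hMclosed
  haveI : CompleteSpace K := hKclosed.completeSpace_coe
  set T₀ : (Fin k → A) →L[ℂ] A :=
    ∑ i : Fin k, (ContinuousLinearMap.mul ℂ A (t i)).comp (ContinuousLinearMap.proj i) with hT₀
  have hT₀apply : ∀ a : Fin k → A, T₀ a = ∑ i : Fin k, t i * a i := by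
    intro a
    rw [hT₀]
    simp [ContinuousLinearMap.sum_apply]
  have hT₀mem : ∀ a : Fin k → A, T₀ a ∈ K := by
    intro a
    rw [hT₀apply]
    exact Submodule.sum_mem _ fun i _ => Ideal.mul_mem_right _ _ (ht i)
  set T : (Fin k → A) →L[ℂ] K := T₀.codRestrict K hT₀mem with hT
  have hTsurj : Function.Surjective T := by
    rintro ⟨z, hz⟩
    have hz' : z ∈ Ideal.span (Set.range t) := hgen ▸ hz
    rw [Ideal.span, Submodule.mem_span_range_iff_exists_fun] at hz'
    obtain ⟨c, hc⟩ := hz'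
    refine ⟨c, ?_⟩
    apply Subtype.ext
    show T₀ c = z
    rw [hT₀apply]
    rw [← hc]
    exact Finset.sum_congr rfl fun i _ => by rw [smul_eq_mul, mul_comm]
  obtain ⟨C, hCpos, hC⟩ := T.exists_preimage_norm_le hTsurj
  -- a bounded choice of preimages
  have hsel : ∀ z : A, ∃ a : Fin k → A,
      z ∈ M → ((∑ i : Fin k, t i * a i) = z ∧ ∀ i, ‖a i‖ ≤ C * ‖z‖) := by
    intro z
    by_cases hz : z ∈ M
    · obtain ⟨a, ha1, ha2⟩ := hC ⟨z, hz⟩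
      refine ⟨a, fun _ => ⟨?_, fun i => ?_⟩⟩
      · have := congrArg Subtype.val ha1
        rwa [show ((T a : K) : A) = T₀ a from rfl, hT₀apply] at this
      · exact (norm_le_pi_norm a i).trans ha2
    · exact ⟨0, fun h => absurd h hz⟩
  choose g hg using hsel
  -- the reduction map
  set red : A → A := fun z => z - φ z • (1 : A) with hred
  have hredM : ∀ z, red z ∈ M := by
    intro z
    rw [← hφ]
    rw [hred]
    simp only [map_sub, map_smul, map_one, smul_eq_mul, mul_one, sub_self]
  set c₁ : ℝ := 1 + ‖WeakDual.CharacterSpace.toCLM φ‖ * ‖(1 : A)‖ with hc₁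
  have hc₁one : (1 : ℝ) ≤ c₁ := by
    rw [hc₁]
    nlinarith [norm_nonneg (WeakDual.CharacterSpace.toCLM φ), norm_nonneg (1 : A)]
  have hrednorm : ∀ z, ‖red z‖ ≤ c₁ * ‖z‖ := by
    intro z
    rw [hred, hc₁]
    calc ‖z - φ z • (1 : A)‖ ≤ ‖z‖ + ‖φ z • (1 : A)‖ := norm_sub_le _ _
      _ ≤ ‖z‖ + ‖WeakDual.CharacterSpace.toCLM φ‖ * ‖z‖ * ‖(1 : A)‖ := by
          rw [norm_smul]
          have := (WeakDual.CharacterSpace.toCLM φ).le_opNorm z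
          have h1 : ‖φ z‖ ≤ ‖WeakDual.CharacterSpace.toCLM φ‖ * ‖z‖ := this
          nlinarith [norm_nonneg (1 : A)]
      _ = (1 + ‖WeakDual.CharacterSpace.toCLM φ‖ * ‖(1 : A)‖) * ‖z‖ := by ring
  set E : (N : ℕ) → (Fin N → Fin k) → A := Efam red g x with hE
  set P : (N : ℕ) → (Fin N → Fin k) → A := Pfam t with hP
  have hEmem : ∀ N (w : Fin N → Fin k), E N w ∈ M := by
    intro N
    induction N with
    | zero => intro w; exact hxM
    | succ N ih => intro w; exact hredM _
  have hgE : ∀ N (w : Fin N → Fin k),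
      (∑ i : Fin k, t i * g (E N w) i) = E N w ∧ ∀ i, ‖g (E N w) i‖ ≤ C * ‖E N w‖ :=
    fun N w => hg _ (hEmem N w)
  set B : ℝ := c₁ * C + 1 with hB
  have hBpos : (0 : ℝ) < B := by nlinarith
  have hEnorm : ∀ N (w : Fin N → Fin k), ‖E N w‖ ≤ B ^ N * ‖x‖ := by
    intro N
    induction N with
    | zero => intro w; simp [hE, Efam]
    | succ N ih =>
      intro w
      have h1 : ‖E (N + 1) w‖ = ‖red (g (E N (w ∘ Fin.succ)) (w 0))‖ := rfl
      rw [h1]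
      calc ‖red (g (E N (w ∘ Fin.succ)) (w 0))‖
          ≤ c₁ * ‖g (E N (w ∘ Fin.succ)) (w 0)‖ := hrednorm _
        _ ≤ c₁ * (C * ‖E N (w ∘ Fin.succ)‖) := by
            have := (hgE N (w ∘ Fin.succ)).2 (w 0)
            nlinarith [norm_nonneg (g (E N (w ∘ Fin.succ)) (w 0))]
        _ ≤ c₁ * (C * (B ^ N * ‖x‖)) := by
            have := ih (w ∘ Fin.succ)
            have hCn : (0:ℝ) ≤ c₁ * C := by nlinarith
            nlinarith [norm_nonneg (E N (w ∘ Fin.succ))]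
        _ ≤ B ^ (N + 1) * ‖x‖ := by
            have hBN : (0:ℝ) ≤ B ^ N := le_of_lt (pow_pos hBpos N)
            have h2 : c₁ * C ≤ B := by rw [hB]; nlinarith
            have h3 : c₁ * (C * (B ^ N * ‖x‖)) = (c₁ * C) * (B ^ N * ‖x‖) := by ring
            have h4 : (c₁ * C) * (B ^ N * ‖x‖) ≤ B * (B ^ N * ‖x‖) :=
              mul_le_mul_of_nonneg_right h2 (mul_nonneg hBN (norm_nonneg x))
            have h5 : B * (B ^ N * ‖x‖) = B ^ (N + 1) * ‖x‖ := by ring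
            linarith
  have hPmem : ∀ N (w : Fin N → Fin k), P N w ∈ M ^ N := by
    intro N
    induction N with
    | zero => intro w; simp [hP, Pfam, Ideal.one_eq_top]
    | succ N ih =>
      intro w
      have h1 : P (N + 1) w = t (w 0) * P N (w ∘ Fin.succ) := by
        rw [hP]
        exact Fin.prod_univ_succ _
      rw [h1, pow_succ, mul_comm (t (w 0))]
      exact Ideal.mul_mem_mul (ih _) (ht _)
  -- main identity
  have key : ∀ N : ℕ, x = ∑ w : Fin N → Fin k, P N w * E N w := by
    intro N
    induction N with
    | zero =>
      have hu : (Finset.univ : Finset (Fin 0 → Fin k)) = {fun i => i.elim0} :=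
        Finset.eq_singleton_iff_unique_mem.mpr
          ⟨Finset.mem_univ _, fun y _ => funext fun i => i.elim0⟩
      rw [hu, Finset.sum_singleton]
      simp [hP, hE, Pfam, Efam]
    | succ N ih =>
      -- one-step expansion
      have hexp : ∀ w : Fin N → Fin k, P N w * E N w
          = ∑ i : Fin k, (φ (g (E N w) i) • (P N w * t i)
              + (P N w * t i) * red (g (E N w) i)) := by
        intro w
        have h1 : E N w = ∑ i : Fin k, t i * g (E N w) i := ((hgE N w).1).symm
        calc P N w * E N w = ∑ i : Fin k, P N w * (t i * g (E N w) i) := by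
              rw [← Finset.mul_sum, ← h1]
          _ = ∑ i : Fin k, (φ (g (E N w) i) • (P N w * t i)
              + (P N w * t i) * red (g (E N w) i)) := by
              apply Finset.sum_congr rfl
              intro i _
              have h2 : (P N w * t i) * red (g (E N w) i)
                  = P N w * (t i * g (E N w) i)
                    - φ (g (E N w) i) • (P N w * t i) := by
                simp only [hred]
                rw [mul_sub, mul_smul_comm, mul_one, mul_assoc]
              rw [h2]
              abel
      -- reindex over words of length N+1
      have hre : ∀ (G : (Fin (N + 1) → Fin k) → A),
          (∑ w' : Fin (N + 1) → Fin k, G w')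
            = ∑ w : Fin N → Fin k, ∑ i : Fin k, G (Fin.cons i w) := by
        intro G
        rw [← (Fin.consEquiv (fun _ => Fin k)).sum_comp G]
        rw [Fintype.sum_prod_type]
        rw [Finset.sum_comm]
        rfl
      have hPcons : ∀ (w : Fin N → Fin k) (i : Fin k),
          P (N + 1) (Fin.cons i w) = P N w * t i := by
        intro w i
        show (∏ j : Fin (N + 1), t ((Fin.cons i w : Fin (N + 1) → Fin k) j))
          = P N w * t i
        rw [Fin.prod_univ_succ (fun j => t ((Fin.cons i w : Fin (N + 1) → Fin k) j))]
        simp only [Fin.cons_zero, Fin.cons_succ]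
        rw [mul_comm]
        rfl
      have hconssucc : ∀ (w : Fin N → Fin k) (i : Fin k),
          (Fin.cons i w : Fin (N + 1) → Fin k) ∘ Fin.succ = w := by
        intro w i
        funext j
        simp [Fin.cons_succ]
      have hEcons : ∀ (w : Fin N → Fin k) (i : Fin k),
          E (N + 1) (Fin.cons i w) = red (g (E N w) i) := by
        intro w i
        show red (g (E N ((Fin.cons i w : Fin (N+1) → Fin k) ∘ Fin.succ))
          ((Fin.cons i w : Fin (N+1) → Fin k) 0)) = red (g (E N w) i)
        rw [hconssucc, Fin.cons_zero]
      set D : (Fin (N + 1) → Fin k) → ℂ :=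
        fun w' => φ (g (E N (w' ∘ Fin.succ)) (w' 0)) with hD
      have hDcons : ∀ (w : Fin N → Fin k) (i : Fin k),
          D (Fin.cons i w) = φ (g (E N w) i) := by
        intro w i
        show φ (g (E N ((Fin.cons i w : Fin (N+1) → Fin k) ∘ Fin.succ))
          ((Fin.cons i w : Fin (N+1) → Fin k) 0)) = φ (g (E N w) i)
        rw [hconssucc, Fin.cons_zero]
      have hid : x = (∑ w' : Fin (N + 1) → Fin k, D w' • P (N + 1) w')
          + ∑ w' : Fin (N + 1) → Fin k, P (N + 1) w' * E (N + 1) w' := by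
        rw [hre, hre, ← Finset.sum_add_distrib]
        rw [ih]
        apply Finset.sum_congr rfl
        intro w _
        rw [hexp w, ← Finset.sum_add_distrib]
        apply Finset.sum_congr rfl
        intro i _
        rw [hPcons, hEcons, hDcons]
      -- the coefficient block vanishes by the independence lemma
      have hblock : (∑ w' : Fin (N + 1) → Fin k, D w' • P (N + 1) w') = 0 := by
        -- group words by their letter multiset
        set symOf : (Fin (N + 1) → Fin k) → Sym (Fin k) (N + 1) :=
          fun w' => ⟨(↑(List.ofFn w') : Multiset (Fin k)), by simp⟩ with hsymOf
        have hPsym : ∀ w', P (N + 1) w' = symProd t (symOf w') := by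
          intro w'
          show (∏ i, t (w' i)) = (Multiset.map t ↑(List.ofFn w')).prod
          rw [Multiset.map_coe, Multiset.prod_coe, List.map_ofFn, List.prod_ofFn]
          rfl
        set p : Sym (Fin k) (N + 1) → ℂ :=
          fun σ => ∑ w' ∈ Finset.univ.filter (fun w' => symOf w' = σ), D w' with hp
        have hgroup : (∑ σ : Sym (Fin k) (N + 1), p σ • symProd t σ)
            = ∑ w' : Fin (N + 1) → Fin k, D w' • P (N + 1) w' := by
          have hfib : (∑ σ ∈ (Finset.univ : Finset (Sym (Fin k) (N + 1))),
              ∑ w' ∈ Finset.univ.filter (fun w' => symOf w' = σ), D w' • P (N + 1) w')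
              = ∑ w' : Fin (N + 1) → Fin k, D w' • P (N + 1) w' :=
            Finset.sum_fiberwise_of_maps_to (fun w' _ => Finset.mem_univ (symOf w')) _
          rw [← hfib]
          apply Finset.sum_congr rfl
          intro σ _
          simp only [hp]
          rw [Finset.sum_smul]
          apply Finset.sum_congr rfl
          intro w' hw'
          rw [hPsym w', (Finset.mem_filter.mp hw').2]
        have hmemcl : (∑ σ : Sym (Fin k) (N + 1), p σ • symProd t σ)
            ∈ idealPowClosure M (N + 2) := by
          rw [hgroup]
          have h2 : (∑ w' : Fin (N + 1) → Fin k, D w' • P (N + 1) w')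
              = x - ∑ w' : Fin (N + 1) → Fin k, P (N + 1) w' * E (N + 1) w' := by
            rw [hid]; ring
          rw [h2]
          apply Submodule.sub_mem
          · show x ∈ ((M ^ (N + 2)).restrictScalars ℂ).topologicalClosure
            rw [← SetLike.mem_coe, Submodule.topologicalClosure_coe,
              Submodule.coe_restrictScalars]
            exact hx (N + 2) (by omega)
          · apply Submodule.sum_mem
            intro w' _
            apply Submodule.le_topologicalClosure
            rw [Submodule.restrictScalars_mem]
            rw [pow_succ]
            exact Ideal.mul_mem_mul (hPmem (N + 1) w') (hEmem (N + 1) w')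
        have hzero := indep t M hgen φ hφ (N + 1) (hdim (N + 1) (by omega)) p hmemcl
        rw [← hgroup]
        apply Finset.sum_eq_zero
        intro σ _
        rw [hzero σ, zero_smul]
      rw [hid, hblock, zero_add]
  -- conclusion: the estimate on a small neighbourhood
  set r : ℝ := (2 * ((k : ℝ) + 1) * B)⁻¹ with hr
  have hrpos : 0 < r := by rw [hr]; positivity
  have hd : (0 : ℝ) < 2 * ((k : ℝ) + 1) * B := by positivity
  have hkrB : (k : ℝ) * r * B ≤ 1 / 2 := by
    have h1 : (k : ℝ) * r * B = ((k : ℝ) * B) / (2 * ((k : ℝ) + 1) * B) := by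
      rw [hr]; field_simp
    rw [h1, div_le_iff₀ hd]
    have hk0 : (0 : ℝ) ≤ (k : ℝ) := Nat.cast_nonneg k
    nlinarith
  have hkrB0 : (0 : ℝ) ≤ (k : ℝ) * r * B := by positivity
  refine ⟨{ψ : WeakDual.characterSpace ℂ A | ∀ i, ‖ψ (t i)‖ < r}, ?_, ?_⟩
  · have hopen : IsOpen {ψ : WeakDual.characterSpace ℂ A | ∀ i, ‖ψ (t i)‖ < r} := by
      have heq : {ψ : WeakDual.characterSpace ℂ A | ∀ i, ‖ψ (t i)‖ < r}
          = ⋂ i : Fin k, {ψ : WeakDual.characterSpace ℂ A | ‖ψ (t i)‖ < r} := by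
        ext ψ
        simp [Set.mem_iInter]
      rw [heq]
      apply isOpen_iInter_of_finite
      intro i
      have hcont : Continuous fun ψ : WeakDual.characterSpace ℂ A => ψ (t i) :=
        (WeakDual.eval_continuous (t i)).comp continuous_subtype_val
      have heq2 : {ψ : WeakDual.characterSpace ℂ A | ‖ψ (t i)‖ < r}
          = (fun ψ : WeakDual.characterSpace ℂ A => ψ (t i)) ⁻¹' (Metric.ball 0 r) := by
        ext ψ
        simp [Metric.mem_ball, dist_zero_right]
      rw [heq2]
      exact Metric.isOpen_ball.preimage hcont
    apply hopen.mem_nhds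
    intro i
    have h0 : φ (t i) = 0 := (hφ _).mpr (ht i)
    simp only [Set.mem_setOf_eq, h0, norm_zero]
    exact hrpos
  · intro ψ hψ
    have hbound : ∀ N : ℕ, ‖ψ x‖
        ≤ ‖WeakDual.CharacterSpace.toCLM ψ‖ * ‖x‖ * (1 / 2) ^ N := by
      intro N
      conv_lhs => rw [key N]
      rw [map_sum]
      have hterm : ∀ w : Fin N → Fin k,
          ‖ψ (P N w * E N w)‖
            ≤ r ^ N * (‖WeakDual.CharacterSpace.toCLM ψ‖ * (B ^ N * ‖x‖)) := by
        intro w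
        rw [map_mul, norm_mul]
        have hψP : ‖ψ (P N w)‖ ≤ r ^ N := by
          have hmp : ψ (P N w) = ∏ i : Fin N, ψ (t (w i)) :=
            map_prod ψ (fun i => t (w i)) Finset.univ
          rw [hmp]
          calc ‖∏ i : Fin N, ψ (t (w i))‖ = ∏ i : Fin N, ‖ψ (t (w i))‖ := norm_prod _ _
            _ ≤ ∏ _i : Fin N, r := Finset.prod_le_prod (fun _ _ => norm_nonneg _)
                (fun i _ => le_of_lt (hψ (w i)))
            _ = r ^ N := by rw [Finset.prod_const, Finset.card_univ, Fintype.card_fin]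
        have hψE : ‖ψ (E N w)‖
            ≤ ‖WeakDual.CharacterSpace.toCLM ψ‖ * (B ^ N * ‖x‖) := by
          calc ‖ψ (E N w)‖ ≤ ‖WeakDual.CharacterSpace.toCLM ψ‖ * ‖E N w‖ :=
                (WeakDual.CharacterSpace.toCLM ψ).le_opNorm (E N w)
            _ ≤ ‖WeakDual.CharacterSpace.toCLM ψ‖ * (B ^ N * ‖x‖) :=
                mul_le_mul_of_nonneg_left (hEnorm N w) (norm_nonneg _)
        exact mul_le_mul hψP hψE (norm_nonneg _) (by positivity)
      calc ‖∑ w : Fin N → Fin k, ψ (P N w * E N w)‖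
          ≤ ∑ w : Fin N → Fin k, ‖ψ (P N w * E N w)‖ := norm_sum_le _ _
        _ ≤ ∑ _w : Fin N → Fin k,
            r ^ N * (‖WeakDual.CharacterSpace.toCLM ψ‖ * (B ^ N * ‖x‖)) :=
            Finset.sum_le_sum fun w _ => hterm w
        _ = (k ^ N : ℝ) * (r ^ N * (‖WeakDual.CharacterSpace.toCLM ψ‖ * (B ^ N * ‖x‖))) := by
            rw [Finset.sum_const, Finset.card_univ, nsmul_eq_mul]
            norm_num [Fintype.card_fun]
        _ = ‖WeakDual.CharacterSpace.toCLM ψ‖ * ‖x‖ * ((k : ℝ) * r * B) ^ N := by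
            rw [mul_pow, mul_pow]
            ring
        _ ≤ ‖WeakDual.CharacterSpace.toCLM ψ‖ * ‖x‖ * (1 / 2) ^ N := by
            apply mul_le_mul_of_nonneg_left _ (by positivity)
            exact pow_le_pow_left₀ hkrB0 hkrB N
    have hlim : Filter.Tendsto
        (fun N : ℕ => ‖WeakDual.CharacterSpace.toCLM ψ‖ * ‖x‖ * (1 / 2) ^ N)
        Filter.atTop (nhds 0) := by
      have h2 : Filter.Tendsto (fun N : ℕ => ((1 : ℝ) / 2) ^ N) Filter.atTop (nhds 0) :=
        tendsto_pow_atTop_nhds_zero_of_lt_one (by norm_num) (by norm_num)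
      have h3 := h2.const_mul (‖WeakDual.CharacterSpace.toCLM ψ‖ * ‖x‖)
      simpa using h3
    have hle0 : ‖ψ x‖ ≤ 0 := ge_of_tendsto' hlim hbound
    exact norm_le_zero_iff.mp hle0
end

section
/- Let A be a commutative unital complex Banach algebra with a maximal ideal M algebraically generated by t_1,…,t_k, with dim_ℂ(cl(M^n)/cl(M^{n+1})) = C(n+k−1,n) for every n ≥ 1, and let φ be a character of A with ker φ = M. Then there exists ε > 0 such that for every character ψ of A with |ψ(t_i)| < ε for all i = 1,…,k, the kernel of ψ is algebraically finitely generated: ker ψ equals the ideal of A generated by the elements t_1 − ψ(t_1)·1, …, t_k − ψ(t_k)·1. -/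
/-- The Gleason-type claim from the proof of Lemma 3.1(iii): under the hypotheses of
Lemma 3.1 with `ker φ = M`, there is `ε > 0` such that every character `ψ` with
`|ψ(tᵢ)| < ε` for all `i` has algebraically finitely generated kernel, namely
`ker ψ = ⟨t₁ - ψ(t₁)·1, …, t_k - ψ(t_k)·1⟩`. -/
theorem banach_gleason_finitely_generated_kernels
    {A : Type*} [NormedCommRing A] [NormedAlgebra ℂ A] [CompleteSpace A]
    (k : ℕ) (t : Fin k → A) (M : Ideal A) (hmax : M.IsMaximal)
    (hgen : M = Ideal.span (Set.range t))
    (hdim : ∀ n : ℕ, 1 ≤ n →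
      Module.rank ℂ
        (↥(idealPowClosure M n) ⧸
          Submodule.comap (idealPowClosure M n).subtype (idealPowClosure M (n + 1)))
        = ((n + k - 1).choose n : Cardinal))
    (φ : WeakDual.characterSpace ℂ A) (hφ : ∀ x : A, φ x = 0 ↔ x ∈ M) :
    ∃ ε : ℝ, 0 < ε ∧
      ∀ ψ : WeakDual.characterSpace ℂ A, (∀ i : Fin k, ‖ψ (t i)‖ < ε) →
        RingHom.ker (ψ : A →+* ℂ)
          = Ideal.span (Set.range fun i => t i - algebraMap ℂ A (ψ (t i))) := by
  classical
  haveI : M.IsMaximal := hmax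
  haveI : Nontrivial A := by
    rcases subsingleton_or_nontrivial A with h | h
    · exact absurd (Subsingleton.elim M ⊤) hmax.ne_top
    · exact h
  have hMclosed : IsClosed (M : Set A) := Ideal.IsMaximal.isClosed
  set M' : Submodule ℂ A := M.restrictScalars ℂ with hM'def
  haveI : CompleteSpace M' := hMclosed.completeSpace_coe
  -- The linear map realizing generation of `M` by `t`
  let T : (Fin k → A) →ₗ[ℂ] A :=
    { toFun := fun a => ∑ i, a i * t i
      map_add' := by intro a b; simp [add_mul, Finset.sum_add_distrib]
      map_smul' := by intro c a; simp [Finset.smul_sum, smul_mul_assoc] }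
  have hTcont : Continuous T := by
    have h : Continuous fun a : Fin k → A => ∑ i, a i * t i :=
      continuous_finset_sum _ fun i _ => (continuous_apply i).mul continuous_const
    exact h
  have hTmem : ∀ a : Fin k → A, T a ∈ M' := by
    intro a
    show (∑ i, a i * t i) ∈ M
    exact Ideal.sum_mem _ fun i _ =>
      M.mul_mem_left _ (by rw [hgen]; exact Ideal.subset_span ⟨i, rfl⟩)
  let Tc : (Fin k → A) →L[ℂ] M' := ContinuousLinearMap.codRestrict ⟨T, hTcont⟩ M' hTmem
  have hsurj : Function.Surjective Tc := by
    rintro ⟨y, hy⟩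
    have hy' : y ∈ M := hy
    rw [hgen, Ideal.mem_span_range_iff_exists_fun] at hy'
    obtain ⟨c, hc⟩ := hy'
    exact ⟨c, Subtype.ext hc⟩
  obtain ⟨C, hCpos, hC⟩ := Tc.exists_preimage_norm_le hsurj
  set B : ℝ := ‖(1 : A)‖ with hBdef
  have hB0 : 0 ≤ B := norm_nonneg _
  have hφbound : ∀ (χ : WeakDual.characterSpace ℂ A) (y : A), ‖χ y‖ ≤ ‖y‖ * B :=
    fun χ y => AlgHom.norm_apply_le_self_mul_norm_one χ y
  have halg : ∀ z : ℂ, ‖algebraMap ℂ A z‖ ≤ ‖z‖ * B := by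
    intro z
    rw [Algebra.algebraMap_eq_smul_one, norm_smul]
  have hmemM : ∀ y : A, y - algebraMap ℂ A (φ y) ∈ M := by
    intro y
    refine (hφ _).mp ?_
    rw [map_sub, AlgHomClass.commutes]
    simp
  have key : ∀ y : A, ∃ a : Fin k → A,
      (∑ i, a i * t i) = y - algebraMap ℂ A (φ y) ∧
      ‖a‖ ≤ C * ‖y - algebraMap ℂ A (φ y)‖ := by
    intro y
    obtain ⟨a, ha1, ha2⟩ := hC ⟨y - algebraMap ℂ A (φ y), hmemM y⟩
    refine ⟨a, ?_, ?_⟩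
    · exact congrArg Subtype.val ha1
    · simpa using ha2
  choose g hg1 hg2 using key
  set D : ℝ := C * (1 + B * B) with hDdef
  have hD0 : 0 < D := by positivity
  have hgD : ∀ (y : A) (i : Fin k), ‖g y i‖ ≤ D * ‖y‖ := by
    intro y i
    calc ‖g y i‖ ≤ ‖g y‖ := norm_le_pi_norm (g y) i
      _ ≤ C * ‖y - algebraMap ℂ A (φ y)‖ := hg2 y
      _ ≤ C * (‖y‖ + ‖y‖ * B * B) := by
          refine mul_le_mul_of_nonneg_left ?_ hCpos.le
          calc ‖y - algebraMap ℂ A (φ y)‖ ≤ ‖y‖ + ‖algebraMap ℂ A (φ y)‖ := norm_sub_le _ _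
            _ ≤ ‖y‖ + ‖φ y‖ * B := by gcongr; exact halg _
            _ ≤ ‖y‖ + ‖y‖ * B * B := by
                have := hφbound φ y
                nlinarith [norm_nonneg (φ y), norm_nonneg y]
      _ = D * ‖y‖ := by rw [hDdef]; ring
  set K : ℝ := k * B * D with hKdef
  have hK0 : 0 ≤ K := by positivity
  set ε : ℝ := 1 / (2 * (K + 1)) with hεdef
  have hε : 0 < ε := by positivity
  set q : ℝ := K * ε with hqdef
  have hq0 : 0 ≤ q := by positivity
  have hq1 : q < 1 := by
    rw [hqdef, hεdef, mul_one_div, div_lt_one (by positivity)]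
    linarith
  refine ⟨ε, hε, ?_⟩
  intro ψ hψ
  set d : Fin k → A := fun i => t i - algebraMap ℂ A (ψ (t i)) with hddef
  have hψd : ∀ i, ψ (d i) = 0 := by
    intro i
    rw [hddef]
    simp only [map_sub, AlgHomClass.commutes]
    simp
  refine le_antisymm ?_ ?_
  · -- the hard inclusion: ker ψ ⊆ span (range d)
    intro x hx
    have hx0 : ψ x = 0 := hx
    -- the Gleason iteration
    set R : A → A := fun y => ∑ i, algebraMap ℂ A (ψ (t i)) * g y i with hRdef
    set X : ℕ → A := fun m => R^[m] x with hXdef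
    have hRnorm : ∀ y, ‖R y‖ ≤ q * ‖y‖ := by
      intro y
      calc ‖∑ i, algebraMap ℂ A (ψ (t i)) * g y i‖
          ≤ ∑ i, ‖algebraMap ℂ A (ψ (t i)) * g y i‖ := norm_sum_le _ _
        _ ≤ ∑ _i : Fin k, ε * B * (D * ‖y‖) := by
            refine Finset.sum_le_sum fun i _ => ?_
            calc ‖algebraMap ℂ A (ψ (t i)) * g y i‖
                ≤ ‖algebraMap ℂ A (ψ (t i))‖ * ‖g y i‖ := norm_mul_le _ _
              _ ≤ (‖ψ (t i)‖ * B) * (D * ‖y‖) := by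
                  refine mul_le_mul (halg _) (hgD y i) (norm_nonneg _) ?_
                  positivity
              _ ≤ ε * B * (D * ‖y‖) := by
                  have h1 := (hψ i).le
                  have h2 : (0:ℝ) ≤ D * ‖y‖ := by positivity
                  have h3 := mul_le_mul_of_nonneg_right
                    (mul_le_mul_of_nonneg_right h1 hB0) h2
                  linarith
        _ = k * (ε * B * (D * ‖y‖)) := by
            rw [Finset.sum_const, Finset.card_univ, Fintype.card_fin, nsmul_eq_mul]
        _ = q * ‖y‖ := by rw [hqdef, hKdef]; ring
    have hXsucc : ∀ m, X (m + 1) = R (X m) := by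
      intro m
      rw [hXdef]
      exact Function.iterate_succ_apply' R m x
    have hXnorm : ∀ m, ‖X m‖ ≤ q ^ m * ‖x‖ := by
      intro m
      induction m with
      | zero => simp [hXdef]
      | succ n ih =>
        rw [hXsucc n, pow_succ]
        calc ‖R (X n)‖ ≤ q * ‖X n‖ := hRnorm _
          _ ≤ q * (q ^ n * ‖x‖) := by exact mul_le_mul_of_nonneg_left ih hq0
          _ = q ^ n * q * ‖x‖ := by ring
    have hstep : ∀ y : A, y = algebraMap ℂ A (φ y) + (∑ i, g y i * d i) + R y := by
      intro y
      have h1 := hg1 y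
      have h2 : ∑ i, g y i * d i =
          (∑ i, g y i * t i) - ∑ i, algebraMap ℂ A (ψ (t i)) * g y i := by
        rw [← Finset.sum_sub_distrib]
        refine Finset.sum_congr rfl fun i _ => ?_
        rw [hddef]
        ring
      rw [hRdef]
      simp only []
      rw [h2, h1]
      ring
    set F : ℕ → A := fun m => algebraMap ℂ A (φ (X m)) + ∑ i, g (X m) i * d i with hFdef
    have hFstep : ∀ m, F m = X m - X (m + 1) := by
      intro m
      have h := hstep (X m)
      rw [hXsucc m, hFdef]
      simp only []
      linear_combination -h
    -- summability
    have hsq : Summable fun m : ℕ => q ^ m := summable_geometric_of_lt_one hq0 hq1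
    have hsum_i : ∀ i, Summable fun m => g (X m) i := by
      intro i
      refine Summable.of_norm_bounded (hsq.mul_left (D * ‖x‖)) fun m => ?_
      calc ‖g (X m) i‖ ≤ D * ‖X m‖ := hgD _ i
        _ ≤ D * (q ^ m * ‖x‖) := mul_le_mul_of_nonneg_left (hXnorm m) hD0.le
        _ = D * ‖x‖ * q ^ m := by ring
    have hsum_φ : Summable fun m => φ (X m) := by
      refine Summable.of_norm_bounded (hsq.mul_left (‖x‖ * B)) fun m => ?_
      calc ‖φ (X m)‖ ≤ ‖X m‖ * B := hφbound φ _
        _ ≤ (q ^ m * ‖x‖) * B := mul_le_mul_of_nonneg_right (hXnorm m) hB0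
        _ = ‖x‖ * B * q ^ m := by ring
    have hsum_alg : Summable fun m => algebraMap ℂ A (φ (X m)) :=
      hsum_φ.map (algebraMap ℂ A) (continuous_algebraMap ℂ A)
    have hsum_id : ∀ i, Summable fun m => g (X m) i * d i := by
      intro i
      exact Summable.map (hsum_i i) (AddMonoidHom.mulRight (d i)) (continuous_mul_right (d i))
    have hsum_sums : Summable fun m => ∑ i, g (X m) i * d i :=
      (hasSum_sum fun i _ => (hsum_id i).hasSum).summable
    have hsum_F : Summable F := hsum_alg.add hsum_sums
    -- the sum of F is x
    have hXto0 : Filter.Tendsto X Filter.atTop (nhds 0) := by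
      refine squeeze_zero_norm hXnorm ?_
      have := (tendsto_pow_atTop_nhds_zero_of_lt_one hq0 hq1).mul_const ‖x‖
      simpa using this
    have hpartial : ∀ N, ∑ m ∈ Finset.range N, F m = x - X N := by
      intro N
      calc ∑ m ∈ Finset.range N, F m = ∑ m ∈ Finset.range N, (X m - X (m + 1)) :=
            Finset.sum_congr rfl fun m _ => hFstep m
        _ = X 0 - X N := Finset.sum_range_sub' X N
        _ = x - X N := by simp [hXdef]
    have htend1 : Filter.Tendsto (fun N => ∑ m ∈ Finset.range N, F m) Filter.atTop
        (nhds (∑' m, F m)) := hsum_F.hasSum.tendsto_sum_nat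
    have htend2 : Filter.Tendsto (fun N => ∑ m ∈ Finset.range N, F m) Filter.atTop (nhds x) := by
      simp only [hpartial]
      simpa using tendsto_const_nhds.sub hXto0
    have htsumF : ∑' m, F m = x := tendsto_nhds_unique htend1 htend2
    set c : ℂ := ∑' m, φ (X m) with hcdef
    set b : Fin k → A := fun i => ∑' m, g (X m) i with hbdef
    have hx_eq : x = algebraMap ℂ A c + ∑ i, b i * d i := by
      rw [← htsumF, hFdef]
      rw [Summable.tsum_add hsum_alg hsum_sums]
      congr 1
      · exact ((hsum_φ.hasSum.map (algebraMap ℂ A) (continuous_algebraMap ℂ A)).tsum_eq)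
      · rw [Summable.tsum_finsetSum fun i _ => hsum_id i]
        exact Finset.sum_congr rfl fun i _ => (hsum_i i).tsum_mul_right (d i)
    have hc0 : c = 0 := by
      have h := congrArg (ψ : A →+* ℂ) hx_eq
      simp only [RingHom.coe_coe] at h
      rw [hx0] at h
      simp only [map_add, map_sum, map_mul, AlgHomClass.commutes, hψd, mul_zero,
        Finset.sum_const_zero, add_zero, Algebra.algebraMap_self, RingHom.id_apply] at h
      exact h.symm
    have hxsum : x = ∑ i, b i * d i := by
      rw [hx_eq, hc0, map_zero, zero_add]
    rw [hxsum]
    exact Ideal.sum_mem _ fun i _ => Ideal.mul_mem_left _ _ (Ideal.subset_span ⟨i, rfl⟩)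
  · -- easy inclusion
    rw [Ideal.span_le]
    rintro _ ⟨i, rfl⟩
    exact hψd i
end

section
/- Let A be a Fréchet algebra and M a closed maximal ideal of A such that ⋂_{n≥1} cl(M^n) = {0} and dim_ℂ(cl(M^n)/cl(M^{n+1})) = C(n+k−1,n) for every n ≥ 1. Then there exist t_1,…,t_k ∈ M such that for every n ≥ 1, cl(M^n) is the (internal, algebraic) direct sum of cl(M^{n+1}) and the linear span of the monomials {t^I : |I| = n}; equivalently, the cosets of the monomials {t^I : |I| = n} form a basis of cl(M^n)/cl(M^{n+1}). -/
set_option linter.unusedSectionVars false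
set_option linter.unusedVariables false
set_option maxHeartbeats 1000000

/-- The `ℂ`-linear span of the monomials `t^I` with `|I| = n`. -/
def monomialSpan {A : Type*} [CommRing A] [Algebra ℂ A] {k : ℕ}
    (t : Fin k → A) (n : ℕ) : Submodule ℂ A :=
  Submodule.span ℂ {x : A | ∃ I : Fin k →₀ ℕ, (I.sum fun _ e => e) = n ∧ x = ∏ i, t i ^ I i}

section Aux

variable {A : Type*} [CommRing A] [Algebra ℂ A] [UniformSpace A] [IsUniformAddGroup A]
    [ContinuousMul A] [ContinuousSMul ℂ A] (M : Ideal A)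

lemma ipc_isClosed (n : ℕ) : IsClosed ((idealPowClosure M n : Submodule ℂ A) : Set A) :=
  Submodule.isClosed_topologicalClosure _

lemma ipc_antitone {m n : ℕ} (h : m ≤ n) : idealPowClosure M n ≤ idealPowClosure M m :=
  Submodule.topologicalClosure_mono <| fun x hx => Ideal.pow_le_pow_right h hx

lemma pow_le_ipc (n : ℕ) : (M ^ n).restrictScalars ℂ ≤ idealPowClosure M n :=
  Submodule.le_topologicalClosure _

lemma mul_mem_ipc {i j : ℕ} {a x : A} (ha : a ∈ M ^ i) (hx : x ∈ idealPowClosure M j) :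
    a * x ∈ idealPowClosure M (i + j) := by
  have hcl : IsClosed ((fun y => a * y) ⁻¹' (idealPowClosure M (i + j) : Set A)) :=
    (ipc_isClosed M (i + j)).preimage (continuous_mul_left a)
  have hsub : ((M ^ j).restrictScalars ℂ : Set A) ⊆
      (fun y => a * y) ⁻¹' (idealPowClosure M (i + j) : Set A) := by
    intro y hy
    exact pow_le_ipc M (i + j) <| by
      show a * y ∈ M ^ (i + j)
      rw [pow_add]; exact Ideal.mul_mem_mul ha hy
  exact closure_minimal hsub hcl hx

end Aux

section Key

variable {A : Type*} [CommRing A] [Algebra ℂ A] [UniformSpace A] [IsUniformAddGroup A]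
    [ContinuousMul A] [ContinuousSMul ℂ A]

/-- If `N2 ≤ N1` are closed subspaces with finite-dimensional quotient, and `S ≤ N1`
is dense in `N1`, then `N1 = N2 ⊔ S`. -/
lemma dense_sup_of_finite_codim (N1 N2 S : Submodule ℂ A)
    (hN1c : IsClosed (N1 : Set A)) (hN2c : IsClosed (N2 : Set A))
    (hle : N2 ≤ N1) (hSle : S ≤ N1) (hdense : N1 ≤ S.topologicalClosure)
    (hfin : FiniteDimensional ℂ (↥N1 ⧸ Submodule.comap N1.subtype N2)) :
    N1 = N2 ⊔ S := by
  set T : Submodule ℂ ↥N1 := Submodule.comap N1.subtype N2 with hT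
  haveI : IsClosed (T : Set ↥N1) := hN2c.preimage continuous_subtype_val
  set W : Submodule ℂ (↥N1 ⧸ T) := Submodule.map T.mkQ (Submodule.comap N1.subtype S) with hW
  haveI : Module.Finite ℂ ↥W := hfin.finiteDimensional_submodule W
  have hWc : IsClosed (W : Set (↥N1 ⧸ T)) := W.closed_of_finiteDimensional
  have hWtop : W = ⊤ := by
    rw [eq_top_iff]
    rintro q -
    obtain ⟨x, rfl⟩ := T.mkQ_surjective q
    have hx : x ∈ closure ((Submodule.comap N1.subtype S : Submodule ℂ ↥N1) : Set ↥N1) := by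
      rw [closure_subtype]
      have himg : (Subtype.val '' ((Submodule.comap N1.subtype S : Submodule ℂ ↥N1) : Set ↥N1))
          = (S : Set A) := by
        ext y
        constructor
        · rintro ⟨z, hz, rfl⟩; exact hz
        · intro hy; exact ⟨⟨y, hSle hy⟩, hy, rfl⟩
      rw [himg]
      exact hdense x.2
    have hcont : Continuous T.mkQ := continuous_quot_mk
    have hmem : T.mkQ x ∈ closure (T.mkQ ''
        ((Submodule.comap N1.subtype S : Submodule ℂ ↥N1) : Set ↥N1)) :=
      (image_closure_subset_closure_image hcont) (Set.mem_image_of_mem _ hx)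
    refine closure_minimal ?_ hWc hmem
    rintro y ⟨z, hz, rfl⟩
    exact Submodule.mem_map_of_mem hz
  have hsup : T ⊔ Submodule.comap N1.subtype S = ⊤ := by
    rw [← Submodule.map_mkQ_eq_top]
    exact hWtop
  have := congrArg (Submodule.map N1.subtype) hsup
  rw [Submodule.map_sup, Submodule.map_comap_subtype, Submodule.map_comap_subtype,
    Submodule.map_subtype_top, inf_eq_right.mpr hle, inf_eq_right.mpr hSle] at this
  exact this.symm

end Key

section Indep

variable {A : Type*} [CommRing A] [Algebra ℂ A]

lemma inf_span_eq_bot {ι : Type*} [Fintype ι] (N1 N2 : Submodule ℂ A) (hle : N2 ≤ N1)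
    (v : ι → A) (hv : ∀ i, v i ∈ N1)
    [hfin : FiniteDimensional ℂ (↥N1 ⧸ Submodule.comap N1.subtype N2)]
    (hcard : Fintype.card ι = Module.finrank ℂ (↥N1 ⧸ Submodule.comap N1.subtype N2))
    (hsup : N1 = N2 ⊔ Submodule.span ℂ (Set.range v)) :
    N2 ⊓ Submodule.span ℂ (Set.range v) = ⊥ := by
  classical
  set T : Submodule ℂ ↥N1 := Submodule.comap N1.subtype N2 with hT
  set v' : ι → ↥N1 := fun i => ⟨v i, hv i⟩ with hv'
  set sp : Submodule ℂ ↥N1 := Submodule.span ℂ (Set.range v') with hsp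
  have hmapsp : Submodule.map N1.subtype sp = Submodule.span ℂ (Set.range v) := by
    rw [hsp, Submodule.map_span, ← Set.range_comp]
    rfl
  have hTs : T ⊔ sp = ⊤ := by
    apply Submodule.map_injective_of_injective N1.injective_subtype
    rw [Submodule.map_sup, Submodule.map_comap_subtype, Submodule.map_subtype_top, hmapsp,
      inf_eq_right.mpr hle]
    exact hsup.symm
  set g : ι → (↥N1 ⧸ T) := fun i => T.mkQ (v' i) with hg
  have hspan : ⊤ ≤ Submodule.span ℂ (Set.range g) := by
    have h1 : Submodule.map T.mkQ (T ⊔ sp) = ⊤ := by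
      rw [hTs, Submodule.map_top, Submodule.range_mkQ]
    rw [Submodule.map_sup] at h1
    have h2 : Submodule.map T.mkQ T = ⊥ := by
      rw [eq_bot_iff]
      rintro q ⟨x, hx, rfl⟩
      exact (Submodule.Quotient.mk_eq_zero T).mpr hx
    rw [h2, bot_sup_eq, Submodule.map_span, ← Set.range_comp] at h1
    exact h1.ge
  have hind : LinearIndependent ℂ g :=
    linearIndependent_of_top_le_span_of_card_eq_finrank hspan hcard
  rw [eq_bot_iff]
  rintro x ⟨hx2, hxs⟩
  have hxN1 : x ∈ N1 := hle hx2
  obtain ⟨c, hc⟩ := (Submodule.mem_span_range_iff_exists_fun ℂ).mp hxs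
  set x' : ↥N1 := ⟨x, hxN1⟩ with hx'
  have hx'sum : x' = ∑ i, c i • v' i := by
    apply Subtype.ext
    simp only [hx']
    rw [← hc]
    simp [hv']
  have hq0 : T.mkQ x' = 0 := (Submodule.Quotient.mk_eq_zero T).mpr hx2
  have hqsum : T.mkQ x' = ∑ i, c i • g i := by
    rw [hx'sum, map_sum]
    simp [hg]
  have hc0 : ∀ i ∈ Finset.univ, c i = 0 :=
    linearIndependent_iff'.mp hind Finset.univ c (by rw [← hqsum, hq0])
  have : x = 0 := by
    rw [← hc]
    exact Finset.sum_eq_zero fun i hi => by rw [hc0 i hi, zero_smul]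
  simp [this]

end Indep

section Mono

variable {A : Type*} [CommRing A] [Algebra ℂ A] {k : ℕ} (t : Fin k → A)

lemma prod_pow_single (i : Fin k) : ∏ j, t j ^ (Finsupp.single i (1:ℕ)) j = t i := by
  classical
  have h : ∀ j, t j ^ (Finsupp.single i (1:ℕ)) j = if i = j then t j else 1 := by
    intro j
    rw [Finsupp.single_apply]
    split <;> simp
  rw [Finset.prod_congr rfl (fun j _ => h j), Finset.prod_ite_eq]
  simp

lemma prod_pow_add_single (I : Fin k →₀ ℕ) (i : Fin k) :
    ∏ j, t j ^ ((I + Finsupp.single i 1 : Fin k →₀ ℕ) j) = (∏ j, t j ^ I j) * t i := by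
  classical
  have h : ∀ j, t j ^ ((I + Finsupp.single i 1 : Fin k →₀ ℕ) j)
      = t j ^ I j * t j ^ (Finsupp.single i (1:ℕ)) j := by
    intro j
    rw [Finsupp.add_apply, pow_add]
  rw [Finset.prod_congr rfl (fun j _ => h j), Finset.prod_mul_distrib, prod_pow_single]

lemma sum_add_single (I : Fin k →₀ ℕ) (i : Fin k) :
    ((I + Finsupp.single i 1).sum fun _ e => e) = (I.sum fun _ e => e) + 1 := by
  classical
  rw [Finsupp.sum_add_index (by simp) (by simp), Finsupp.sum_single_index rfl]

lemma mono_mem_pow (M : Ideal A) (ht : ∀ i, t i ∈ M) (I : Fin k →₀ ℕ) {n : ℕ}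
    (hI : (I.sum fun _ e => e) = n) : (∏ i, t i ^ I i) ∈ M ^ n := by
  classical
  subst hI
  rw [Finsupp.sum_fintype _ _ (fun _ => rfl)]
  induction (Finset.univ : Finset (Fin k)) using Finset.induction with
  | empty => simp
  | @insert a s hx ih =>
    rw [Finset.prod_insert hx, Finset.sum_insert hx, pow_add]
    exact Ideal.mul_mem_mul (Ideal.pow_mem_pow (ht a) _) ih

lemma monomialSpan_le_pow (M : Ideal A) (ht : ∀ i, t i ∈ M) (n : ℕ) :
    monomialSpan t n ≤ (M ^ n).restrictScalars ℂ := by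
  rw [monomialSpan, Submodule.span_le]
  rintro x ⟨I, hI, rfl⟩
  exact mono_mem_pow t M ht I hI

lemma monomialSpan_eq_span_range (n : ℕ) :
    monomialSpan t n = Submodule.span ℂ (Set.range
      (fun I : {P : Fin k →₀ ℕ // (P.sum fun _ ↦ id) = n} =>
        ∏ i, t i ^ (I : Fin k →₀ ℕ) i)) := by
  rw [monomialSpan]
  congr 1
  ext x
  constructor
  · rintro ⟨I, hI, rfl⟩
    exact ⟨⟨I, hI⟩, rfl⟩
  · rintro ⟨⟨I, hI⟩, rfl⟩
    exact ⟨I, hI, rfl⟩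

lemma monomialSpan_mul_le (n : ℕ) :
    monomialSpan t n * Submodule.span ℂ (Set.range t) ≤ monomialSpan t (n + 1) := by
  rw [monomialSpan, monomialSpan, Submodule.span_mul_span, Submodule.span_le]
  rintro x ⟨m, ⟨I, hI, rfl⟩, r, ⟨i, rfl⟩, rfl⟩
  exact Submodule.subset_span ⟨I + Finsupp.single i 1,
    by rw [sum_add_single, hI], (prod_pow_add_single t I i).symm⟩

lemma span_range_le_monomialSpan_one :
    Submodule.span ℂ (Set.range t) ≤ monomialSpan t 1 := by
  rw [Submodule.span_le, monomialSpan]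
  rintro x ⟨i, rfl⟩
  exact Submodule.subset_span ⟨Finsupp.single i 1,
    Finsupp.sum_single_index rfl, (prod_pow_single t i).symm⟩

end Mono

noncomputable instance indexFintype (k n : ℕ) :
    Fintype {P : Fin k →₀ ℕ // (P.sum fun _ ↦ id) = n} :=
  Fintype.ofEquiv (Sym (Fin k) n) (Sym.equivNatSum (Fin k) n)

lemma index_card (k n : ℕ) :
    Fintype.card {P : Fin k →₀ ℕ // (P.sum fun _ ↦ id) = n} = (n + k - 1).choose n := by
  classical
  rw [← Fintype.card_congr (Sym.equivNatSum (Fin k) n), Sym.card_sym_eq_choose,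
    Fintype.card_fin, Nat.add_comm]

/-- Proposition 2.3 (first half): if `M` is a closed maximal ideal of a Fréchet algebra `A`
with `⋂_{n≥1} cl(Mⁿ) = {0}` and `dim (cl(Mⁿ)/cl(Mⁿ⁺¹)) = C(n+k-1, n)` for all `n ≥ 1`, then
there are `t₁, …, t_k ∈ M` such that for every `n ≥ 1` the closed subspace `cl(Mⁿ)` is the
internal direct sum of `cl(Mⁿ⁺¹)` and the linear span of the monomials `{t^I : |I| = n}`. -/
theorem frechet_proposition23_first_half
    {A : Type*} [CommRing A] [Algebra ℂ A] [UniformSpace A] [IsUniformAddGroup A]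
    [ContinuousMul A] [ContinuousSMul ℂ A] [CompleteSpace A]
    (p : ℕ → Seminorm ℂ A) (hmono : Monotone p)
    (hsubmul : ∀ (m : ℕ) (x y : A), p m (x * y) ≤ p m x * p m y)
    (hws : WithSeminorms p)
    (k : ℕ) (M : Ideal A) (hclosed : IsClosed (M : Set A)) (hmax : M.IsMaximal)
    (hcap : (⨅ n : ℕ, idealPowClosure M (n + 1)) = ⊥)
    (hdim : ∀ n : ℕ, 1 ≤ n →
      Module.rank ℂ
        (↥(idealPowClosure M n) ⧸
          Submodule.comap (idealPowClosure M n).subtype (idealPowClosure M (n + 1)))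
        = ((n + k - 1).choose n : Cardinal)) :
    ∃ t : Fin k → A, (∀ i, t i ∈ M) ∧
      ∀ n : ℕ, 1 ≤ n →
        idealPowClosure M n = idealPowClosure M (n + 1) ⊔ monomialSpan t n ∧
        idealPowClosure M (n + 1) ⊓ monomialSpan t n = ⊥ := by
  classical
  set N : ℕ → Submodule ℂ A := idealPowClosure M with hN
  -- finite-dimensionality of the quotients
  have hfin : ∀ n : ℕ, 1 ≤ n → FiniteDimensional ℂ
      (↥(N n) ⧸ Submodule.comap (N n).subtype (N (n + 1))) := by
    intro n hn
    rw [FiniteDimensional, ← Module.rank_lt_aleph0_iff, hdim n hn]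
    exact Cardinal.nat_lt_aleph0 _
  have hfinrank : ∀ n : ℕ, 1 ≤ n → Module.finrank ℂ
      (↥(N n) ⧸ Submodule.comap (N n).subtype (N (n + 1))) = (n + k - 1).choose n :=
    fun n hn => Module.finrank_eq_of_rank_eq (hdim n hn)
  -- `N 1 = M`
  have hN1 : N 1 = M.restrictScalars ℂ := by
    apply SetLike.coe_injective
    show (((M ^ 1).restrictScalars ℂ).topologicalClosure : Set A) = _
    rw [Submodule.topologicalClosure_coe, pow_one]
    exact hclosed.closure_eq
  -- choose the `t i`
  haveI hfd1 : FiniteDimensional ℂ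
      (↥(N 1) ⧸ Submodule.comap (N 1).subtype (N 2)) := hfin 1 le_rfl
  have hfr1 : Module.finrank ℂ (↥(N 1) ⧸ Submodule.comap (N 1).subtype (N 2)) = k := by
    rw [hfinrank 1 le_rfl]
    have h1 : 1 + k - 1 = k := by omega
    rw [h1, Nat.choose_one_right]
  set T1 : Submodule ℂ ↥(N 1) := Submodule.comap (N 1).subtype (N 2) with hT1
  set b : Module.Basis (Fin k) ℂ (↥(N 1) ⧸ T1) :=
    (Module.finBasis ℂ _).reindex (finCongr hfr1) with hb
  have hx := fun i => T1.mkQ_surjective (b i)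
  choose x hxb using hx
  set t : Fin k → A := fun i => (x i : A) with htdef
  have ht : ∀ i, t i ∈ M := by
    intro i
    exact hN1.le (x i).2
  -- base decomposition `N 1 = N 2 ⊔ span (range t)`
  have hbase : N 1 = N 2 ⊔ Submodule.span ℂ (Set.range t) := by
    have hrange : ⇑T1.mkQ ∘ x = ⇑b := funext hxb
    have htop : Submodule.map T1.mkQ (Submodule.span ℂ (Set.range x)) = ⊤ := by
      rw [Submodule.map_span, ← Set.range_comp, hrange, b.span_eq]
    rw [Submodule.map_mkQ_eq_top] at htop
    have := congrArg (Submodule.map (N 1).subtype) htop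
    rw [Submodule.map_sup, Submodule.map_comap_subtype, Submodule.map_subtype_top,
      Submodule.map_span, ← Set.range_comp] at this
    have hinf : N 1 ⊓ N 2 = N 2 := inf_eq_right.mpr (ipc_antitone M (by omega))
    rw [hinf] at this
    exact this.symm
  have hspanM : Submodule.span ℂ (Set.range t) ≤ M.restrictScalars ℂ := by
    rw [Submodule.span_le]
    rintro y ⟨i, rfl⟩
    exact ht i
  -- inductive spanning property
  have hC : ∀ n : ℕ, 1 ≤ n →
      (M ^ n).restrictScalars ℂ ≤ N (n + 1) ⊔ monomialSpan t n := by
    intro n hn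
    induction n, hn using Nat.le_induction with
    | base =>
      intro y hy
      have hy1 : y ∈ N 1 := pow_le_ipc M 1 hy
      rw [hbase] at hy1
      exact sup_le_sup_left (span_range_le_monomialSpan_one t) _ hy1
    | succ n hn ih =>
      intro y hy
      have hy' : y ∈ M ^ n * M := by rwa [← pow_succ]
      refine Submodule.mul_induction_on hy' ?_ ?_
      · intro a ha b hb
        -- decompose a
        have haN : a ∈ N (n + 1) ⊔ monomialSpan t n := ih ha
        obtain ⟨w, hw, z, hz, hwz⟩ := Submodule.mem_sup.mp haN
        -- decompose b
        have hbN : b ∈ N 2 ⊔ Submodule.span ℂ (Set.range t) := by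
          rw [← hbase]
          exact pow_le_ipc M 1 (by simpa [pow_one] using hb)
        obtain ⟨u, hu, s, hs, hus⟩ := Submodule.mem_sup.mp hbN
        have h1 : a * u ∈ N (n + 2) := by
          have := mul_mem_ipc M (i := n) (j := 2) ha hu
          convert this using 2
        have hsM : s ∈ M := hspanM hs
        have h2 : s * w ∈ N (n + 2) := by
          have : s ∈ M ^ 1 := by simpa [pow_one] using hsM
          have := mul_mem_ipc M (i := 1) (j := n + 1) this hw
          convert this using 2
          omega
        have h3 : z * s ∈ monomialSpan t (n + 1) :=
          monomialSpan_mul_le t n (Submodule.mul_mem_mul hz hs)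
        have heq : a * b = a * u + (s * w + z * s) := by
          rw [← hwz, ← hus]; ring
        rw [heq]
        refine Submodule.add_mem _ (Submodule.mem_sup_left h1)
          (Submodule.add_mem _ (Submodule.mem_sup_left h2) (Submodule.mem_sup_right h3))
      · intro c d hc hd
        exact Submodule.add_mem _ hc hd
  -- the sup decomposition for every n
  have hsup : ∀ n : ℕ, 1 ≤ n → N n = N (n + 1) ⊔ monomialSpan t n := by
    intro n hn
    have hdec : N n = N (n + 1) ⊔ (M ^ n).restrictScalars ℂ := by
      refine dense_sup_of_finite_codim _ _ _ (ipc_isClosed M n) (ipc_isClosed M (n + 1))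
        (ipc_antitone M (Nat.le_succ n)) (pow_le_ipc M n) le_rfl (hfin n hn)
    apply le_antisymm
    · rw [hdec]
      refine sup_le le_sup_left ?_
      exact le_trans (hC n hn) (sup_le le_sup_left le_sup_right)
    · exact sup_le (ipc_antitone M (Nat.le_succ n))
        (le_trans (monomialSpan_le_pow t M ht n) (pow_le_ipc M n))
  refine ⟨t, ht, fun n hn => ⟨hsup n hn, ?_⟩⟩
  -- the inf part
  haveI := hfin n hn
  rw [monomialSpan_eq_span_range]
  refine inf_span_eq_bot (N n) (N (n + 1)) (ipc_antitone M (Nat.le_succ n)) _ ?_ ?_ ?_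
  · intro I
    exact pow_le_ipc M n (mono_mem_pow t M ht I I.2)
  · rw [index_card, hfinrank n hn]
  · rw [← monomialSpan_eq_span_range]
    exact hsup n hn
end

section
/- Let A be a Fréchet algebra and t_1,…,t_k ∈ A elements such that the subalgebra of polynomials in the identity e and t_1,…,t_k is dense in A. Let M be a closed maximal ideal of A containing t_1,…,t_k, and suppose dim_ℂ(cl(M^n)/cl(M^{n+1})) = C(n+k−1,n) for every n ≥ 1. Then there is an injective unital ℂ-algebra homomorphism Ψ̄ from A/⋂_{n≥1} cl(M^n) into the formal power series algebra ℂ[[X_1,…,X_k]] whose coefficient functionals π_I ∘ Ψ̄ (I ∈ ℕ^k) are continuous for the quotient topology; that is, A/⋂_{n≥1} cl(M^n) is a Fréchet algebra of power series in k variables. -/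
/-- The intersection `⋂_{n ≥ 1} cl(M^n)`, as an ideal. -/
def capClosure {A : Type*} [CommRing A] [TopologicalSpace A]
    [ContinuousAdd A] [ContinuousConstSMul A A] (M : Ideal A) : Ideal A :=
  ⨅ n : ℕ, (M ^ (n + 1)).topologicalClosure

open MvPolynomial Submodule

namespace Frechet26

open MvPolynomial Submodule

/-- Total degree of a multi-index. -/
def dg {k : ℕ} (I : Fin k →₀ ℕ) : ℕ := I.sum fun _ e => e

theorem dg_add {k : ℕ} (I J : Fin k →₀ ℕ) : dg (I + J) = dg I + dg J := by
  simpa [dg] using Finsupp.sum_add_index' (by simp) (by simp)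

theorem prod_mem_pow_sum {A : Type*} [CommRing A] (M : Ideal A) {ι : Type*} (s : Finset ι)
    (f : ι → A) (n : ι → ℕ) (h : ∀ i ∈ s, f i ∈ M ^ n i) :
    (∏ i ∈ s, f i) ∈ M ^ (∑ i ∈ s, n i) := by
  classical
  induction s using Finset.induction_on with
  | empty => simp [Ideal.one_eq_top]
  | @insert a s' hx ih =>
    rw [Finset.prod_insert hx, Finset.sum_insert hx, pow_add]
    exact Ideal.mul_mem_mul (h a (Finset.mem_insert_self a s'))
      (ih fun i hi => h i (Finset.mem_insert_of_mem hi))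

/-- The monomial `t^I`. -/
def T {A : Type*} [CommRing A] {k : ℕ} (t : Fin k → A) (I : Fin k →₀ ℕ) : A :=
  I.prod fun i e => t i ^ e

theorem T_zero {A : Type*} [CommRing A] {k : ℕ} (t : Fin k → A) : T t 0 = 1 := by
  simp [T]

theorem T_add {A : Type*} [CommRing A] {k : ℕ} (t : Fin k → A) (I J : Fin k →₀ ℕ) :
    T t (I + J) = T t I * T t J :=
  Finsupp.prod_add_index' (fun a => pow_zero (t a)) (fun a b₁ b₂ => pow_add (t a) b₁ b₂)

theorem T_mem_pow {A : Type*} [CommRing A] {k : ℕ} {M : Ideal A} {t : Fin k → A}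
    (ht : ∀ i, t i ∈ M) (I : Fin k →₀ ℕ) : T t I ∈ M ^ dg I := by
  rw [T, Finsupp.prod, dg, Finsupp.sum]
  exact prod_mem_pow_sum M _ _ _ fun i _ => Ideal.pow_mem_pow (ht i) _

theorem aeval_monomial_eq {A : Type*} [CommRing A] [Algebra ℂ A] {k : ℕ} (t : Fin k → A)
    (I : Fin k →₀ ℕ) (c : ℂ) : MvPolynomial.aeval t (monomial I c) = c • T t I := by
  rw [MvPolynomial.aeval_monomial, Algebra.smul_def]; rfl

theorem aeval_mem_pow {A : Type*} [CommRing A] [Algebra ℂ A] {k : ℕ} {M : Ideal A}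
    {t : Fin k → A} (ht : ∀ i, t i ∈ M) (P : MvPolynomial (Fin k) ℂ) (m : ℕ)
    (hP : ∀ I ∈ P.support, m ≤ dg I) : MvPolynomial.aeval t P ∈ M ^ m := by
  rw [P.as_sum, map_sum]
  refine Submodule.sum_mem _ fun I hI => ?_
  rw [aeval_monomial_eq, Algebra.smul_def]
  exact Ideal.mul_mem_left _ _ (Ideal.pow_le_pow_right (hP I hI) (T_mem_pow ht I))

theorem exists_split {k : ℕ} (P : MvPolynomial (Fin k) ℂ) (n : ℕ) :
    ∃ P₀ P₁ : MvPolynomial (Fin k) ℂ, P = P₀ + P₁ ∧ P₀.totalDegree ≤ n ∧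
      (∀ I, dg I ≤ n → coeff I P₀ = coeff I P) ∧ (∀ I ∈ P₁.support, n + 1 ≤ dg I) := by
  classical
  refine ⟨∑ I ∈ P.support.filter (fun I => dg I ≤ n), monomial I (coeff I P),
    ∑ I ∈ P.support.filter (fun I => ¬ dg I ≤ n), monomial I (coeff I P), ?_, ?_, ?_, ?_⟩
  · rw [Finset.sum_filter_add_sum_filter_not]; exact P.as_sum
  · refine (totalDegree_finset_sum _ _).trans (Finset.sup_le fun I hI => ?_)
    rw [Finset.mem_filter] at hI
    exact le_trans (totalDegree_monomial_le _ _) hI.2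
  · intro I hIn
    rw [MvPolynomial.coeff_sum]
    simp only [coeff_monomial]
    rw [Finset.sum_ite_eq']
    by_cases h : I ∈ P.support.filter (fun I => dg I ≤ n)
    · rw [if_pos h]
    · rw [if_neg h]
      have hs : I ∉ P.support := fun hs => h (Finset.mem_filter.mpr ⟨hs, hIn⟩)
      rw [MvPolynomial.notMem_support_iff] at hs
      exact hs.symm
  · intro I hI
    rw [MvPolynomial.mem_support_iff, MvPolynomial.coeff_sum] at hI
    simp only [coeff_monomial] at hI
    rw [Finset.sum_ite_eq'] at hI
    by_cases h : I ∈ P.support.filter (fun I => ¬ dg I ≤ n)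
    · exact Nat.not_le.mp (Finset.mem_filter.mp h).2
    · rw [if_neg h] at hI; exact absurd rfl hI


section Top
variable {A : Type*} [CommRing A] [Algebra ℂ A] [TopologicalSpace A] [IsTopologicalAddGroup A]
  [ContinuousSMul ℂ A] [ContinuousMul A] {k : ℕ} {M : Ideal A} {t : Fin k → A}


theorem mem_Q_of_pow {x : A} {m n : ℕ} (hx : x ∈ M ^ m) (h : n ≤ m) :
    x ∈ idealPowClosure M n :=
  ((M ^ n).restrictScalars ℂ).le_topologicalClosure (Ideal.pow_le_pow_right h hx)

theorem Q_antitone {n m : ℕ} (h : n ≤ m) : idealPowClosure M m ≤ idealPowClosure M n :=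
  Submodule.topologicalClosure_mono fun _ hx => Ideal.pow_le_pow_right h hx

theorem Q_isClosed (n : ℕ) : IsClosed ((idealPowClosure M n : Submodule ℂ A) : Set A) :=
  Submodule.isClosed_topologicalClosure _

theorem mul_mem_Q (a : A) {x : A} {n : ℕ} (hx : x ∈ idealPowClosure M n) :
    a * x ∈ idealPowClosure M n := by
  have h1 : x ∈ closure ((M ^ n : Ideal A) : Set A) := hx
  have := map_mem_closure (continuous_const.mul continuous_id) h1
    (fun y hy => Ideal.mul_mem_left _ a hy)
  exact this

theorem Q_one_le (hclosed : IsClosed (M : Set A)) {x : A} (hx : x ∈ idealPowClosure M 1) :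
    x ∈ M := by
  have : closure ((M ^ 1 : Ideal A) : Set A) ⊆ M := by
    rw [pow_one]; exact closure_minimal subset_rfl hclosed
  exact this hx

theorem span_top (hdense : Dense ((Algebra.adjoin ℂ (Set.range t) : Subalgebra ℂ A) : Set A))
    (ht : ∀ i, t i ∈ M) (n : ℕ) (x : A) :
    ∃ P : MvPolynomial (Fin k) ℂ, P.totalDegree ≤ n ∧
      x - MvPolynomial.aeval t P ∈ idealPowClosure M (n + 1) := by
  classical
  set QQ := idealPowClosure M (n+1) with hQQ
  set D : Submodule ℂ A :=
    (restrictTotalDegree (Fin k) ℂ n).map (MvPolynomial.aeval t).toLinearMap with hD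
  haveI : FiniteDimensional ℂ D := Module.Finite.map _ _
  haveI : IsClosed ((QQ : Submodule ℂ A) : Set A) := Q_isClosed _
  haveI : FiniteDimensional ℂ (D.map QQ.mkQ) := Module.Finite.map _ _
  have hDqc : IsClosed ((D.map QQ.mkQ : Submodule ℂ (A ⧸ QQ)) : Set (A ⧸ QQ)) :=
    Submodule.closed_of_finiteDimensional _
  have hsupc : IsClosed ((D ⊔ QQ : Submodule ℂ A) : Set A) := by
    have : ((QQ ⊔ D : Submodule ℂ A) : Set A) = QQ.mkQ ⁻¹' (D.map QQ.mkQ) := by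
      rw [← Submodule.comap_map_mkQ]; rfl
    rw [sup_comm, this]
    exact hDqc.preimage QQ.isOpenQuotientMap_mkQ.continuous
  have hsub : ((Algebra.adjoin ℂ (Set.range t) : Subalgebra ℂ A) : Set A) ⊆
      ((D ⊔ QQ : Submodule ℂ A) : Set A) := by
    intro y hy
    have : y ∈ Subalgebra.toSubmodule (Algebra.adjoin ℂ (Set.range t)) := hy
    rw [Algebra.adjoin_eq_span] at this
    refine Submodule.span_le.mpr ?_ this
    rintro z hz
    obtain ⟨I, rfl⟩ : ∃ I, z = T t I := by
      induction hz using Submonoid.closure_induction with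
      | one => exact ⟨0, by simpa using aeval_monomial_eq t (0 : Fin k →₀ ℕ) (1:ℂ)⟩
      | mul _ _ _ _ h1 h2 =>
          obtain ⟨I, rfl⟩ := h1; obtain ⟨J, rfl⟩ := h2
          refine ⟨I + J, ?_⟩
          have h1 := aeval_monomial_eq t (I+J) (1:ℂ)
          have h2 := aeval_monomial_eq t I (1:ℂ)
          have h3 := aeval_monomial_eq t J (1:ℂ)
          rw [one_smul] at h1 h2 h3
          rw [← h1, ← h2, ← h3, ← map_mul, monomial_mul, one_mul]
      | mem z hz =>
          obtain ⟨i, rfl⟩ := hz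
          refine ⟨Finsupp.single i 1, ?_⟩
          have h2 := aeval_monomial_eq t (Finsupp.single i 1) (1:ℂ)
          rw [one_smul] at h2
          rw [← h2, ← MvPolynomial.X, MvPolynomial.aeval_X]
    by_cases hI : dg I ≤ n
    · refine Submodule.mem_sup_left ⟨monomial I 1, ?_, ?_⟩
      · show (monomial I 1 : MvPolynomial (Fin k) ℂ) ∈ restrictTotalDegree (Fin k) ℂ n
        rw [mem_restrictTotalDegree]
        exact le_trans (totalDegree_monomial_le _ _) hI
      · rw [AlgHom.toLinearMap_apply, aeval_monomial_eq, one_smul]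
    · exact Submodule.mem_sup_right
        (mem_Q_of_pow (T_mem_pow ht I) (Nat.not_le.mp hI))
  have htop : (D ⊔ QQ : Submodule ℂ A) = ⊤ := by
    rw [Submodule.eq_top_iff']
    intro y
    have : (Set.univ : Set A) ⊆ ((D ⊔ QQ : Submodule ℂ A) : Set A) := by
      calc (Set.univ : Set A) = closure ((Algebra.adjoin ℂ (Set.range t) : Subalgebra ℂ A) : Set A) :=
            hdense.closure_eq.symm
        _ ⊆ closure ((D ⊔ QQ : Submodule ℂ A) : Set A) := closure_mono hsub
        _ = _ := hsupc.closure_eq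
    exact this (Set.mem_univ y)
  have hx : x ∈ (D ⊔ QQ : Submodule ℂ A) := htop ▸ Submodule.mem_top
  obtain ⟨d, hd, q, hq, rfl⟩ := Submodule.mem_sup.mp hx
  obtain ⟨P, hP, rfl⟩ := hd
  refine ⟨P, (mem_restrictTotalDegree _ _ _).mp hP, ?_⟩
  simpa using hq

theorem aeval_eq_sum_T (t : Fin k → A) (P : MvPolynomial (Fin k) ℂ) (s : Finset (Fin k →₀ ℕ))
    (hs : P.support ⊆ s) : MvPolynomial.aeval t P = ∑ J ∈ s, coeff J P • T t J := by
  conv_lhs => rw [P.as_sum]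
  rw [map_sum]
  rw [Finset.sum_congr rfl (fun J _ => aeval_monomial_eq t J (coeff J P))]
  exact Finset.sum_subset hs fun x _ hx => by
    rw [MvPolynomial.notMem_support_iff.mp hx, zero_smul]

/-- the degree-`n` multi-indices, as a type -/
theorem card_deg_eq (k n : ℕ) :
    ∃ _ : Fintype {I : Fin k →₀ ℕ // dg I = n},
      Fintype.card {I : Fin k →₀ ℕ // dg I = n} = (n + k - 1).choose n := by
  classical
  have e : {I : Fin k →₀ ℕ // dg I = n} ≃ Sym (Fin k) n :=
    (Equiv.subtypeEquivRight (fun I => Iff.rfl)).trans (Sym.equivNatSum (Fin k) n).symm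
  letI fI : Fintype {I : Fin k →₀ ℕ // dg I = n} := Fintype.ofEquiv _ e.symm
  exact ⟨fI, by
    rw [Fintype.card_congr e, Sym.card_sym_eq_choose, Fintype.card_fin, Nat.add_comm k n]⟩

theorem uniq (hclosed : IsClosed (M : Set A)) (hmax : M.IsMaximal) (ht : ∀ i, t i ∈ M)
    (hdense : Dense ((Algebra.adjoin ℂ (Set.range t) : Subalgebra ℂ A) : Set A))
    (hdim : ∀ n : ℕ, 1 ≤ n →
      Module.rank ℂ
        (↥(idealPowClosure M n) ⧸
          Submodule.comap (idealPowClosure M n).subtype (idealPowClosure M (n + 1)))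
        = ((n + k - 1).choose n : Cardinal)) :
    ∀ (n : ℕ) (P : MvPolynomial (Fin k) ℂ), P.totalDegree ≤ n →
      MvPolynomial.aeval t P ∈ idealPowClosure M (n + 1) → P = 0 := by
  classical
  intro n
  induction n with
  | zero =>
    intro P hdeg hQ
    have hne : ∀ I : Fin k →₀ ℕ, I ≠ 0 → coeff I P = 0 := by
      intro I hI
      refine coeff_eq_zero_of_totalDegree_lt ?_
      have h0 : P.totalDegree = 0 := Nat.le_zero.mp hdeg
      rw [h0]
      obtain ⟨i, hi⟩ := Finsupp.ne_iff.mp hI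
      simp only [Finsupp.coe_zero, Pi.zero_apply] at hi
      have hmem : i ∈ I.support := Finsupp.mem_support_iff.mpr hi
      calc 0 < I i := Nat.pos_of_ne_zero hi
        _ ≤ ∑ j ∈ I.support, I j := Finset.single_le_sum (fun _ _ => Nat.zero_le _) hmem
    have hPC : P = C (coeff 0 P) := by
      ext J
      by_cases hJ : J = 0
      · subst hJ; rw [coeff_zero_C]
      · rw [hne J hJ, MvPolynomial.coeff_C, if_neg (Ne.symm hJ)]
    have hc0 : coeff 0 P = 0 := by
      by_contra hc
      have h1 : MvPolynomial.aeval t P = (coeff 0 P) • (1 : A) := by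
        conv_lhs => rw [hPC]
        rw [MvPolynomial.aeval_C, Algebra.algebraMap_eq_smul_one]
      have hm : (coeff 0 P) • (1 : A) ∈ M := Q_one_le hclosed (h1 ▸ hQ)
      have : (1 : A) ∈ M := by
        have := Submodule.smul_mem (M.restrictScalars ℂ) (coeff 0 P)⁻¹ hm
        rwa [smul_smul, inv_mul_cancel₀ hc, one_smul] at this
      exact hmax.ne_top (Ideal.eq_top_iff_one M |>.mpr this)
    rw [hPC, hc0, map_zero]
  | succ n ihU =>
    intro P hdeg hQ
    obtain ⟨P₀, P₁, hPsum, hP₀deg, hP₀coeff, hP₁supp⟩ := exists_split P n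
    have h1 : MvPolynomial.aeval t P₁ ∈ M ^ (n+1) := aeval_mem_pow ht P₁ (n+1) hP₁supp
    have h0 : MvPolynomial.aeval t P₀ ∈ idealPowClosure M (n+1) := by
      have hsub : MvPolynomial.aeval t P₀ =
          MvPolynomial.aeval t P - MvPolynomial.aeval t P₁ := by
        rw [hPsum, map_add]; ring
      rw [hsub]
      exact Submodule.sub_mem _ (Q_antitone (Nat.le_succ _) hQ) (mem_Q_of_pow h1 le_rfl)
    have hP₀ : P₀ = 0 := ihU P₀ hP₀deg h0
    have hlow : ∀ I, dg I ≤ n → coeff I P = 0 := by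
      intro I hI
      rw [← hP₀coeff I hI, hP₀, MvPolynomial.coeff_zero]
    -- the graded piece
    obtain ⟨hfin, hcard⟩ := card_deg_eq k (n+1)
    set GrN := Submodule.comap (idealPowClosure M (n+1)).subtype (idealPowClosure M (n + 2))
      with hGrN
    haveI : Module.Free ℂ (↥(idealPowClosure M (n+1)) ⧸ GrN) := Module.Free.of_divisionRing _ _
    haveI hfd : FiniteDimensional ℂ (↥(idealPowClosure M (n+1)) ⧸ GrN) :=
      Module.finite_of_rank_eq_nat (hdim (n+1) (Nat.le_add_left 1 n))
    have hfr : Module.finrank ℂ (↥(idealPowClosure M (n+1)) ⧸ GrN) = (n + 1 + k - 1).choose (n+1) :=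
      Module.finrank_eq_of_rank_eq (hdim (n+1) (Nat.le_add_left 1 n))
    -- the family of monomial classes
    have hTmem : ∀ I : {I : Fin k →₀ ℕ // dg I = n+1}, T t I.1 ∈ idealPowClosure M (n+1) :=
      fun I => mem_Q_of_pow (T_mem_pow ht I.1) I.2.ge
    set g : {I : Fin k →₀ ℕ // dg I = n+1} → (↥(idealPowClosure M (n+1)) ⧸ GrN) :=
      fun I => Submodule.Quotient.mk ⟨T t I.1, hTmem I⟩ with hg
    have hmkS : ∀ (c : {I : Fin k →₀ ℕ // dg I = n+1} → ℂ),
        (∑ I, c I • g I) = Submodule.Quotient.mk (p := GrN)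
          (∑ I, c I • (⟨T t I.1, hTmem I⟩ : ↥(idealPowClosure M (n+1)))) := by
      intro c
      rw [hg]
      simp only [← Submodule.mkQ_apply, ← map_smul, ← map_sum]
    have hvalS : ∀ (c : {I : Fin k →₀ ℕ // dg I = n+1} → ℂ),
        (((∑ I, c I • (⟨T t I.1, hTmem I⟩ : ↥(idealPowClosure M (n+1))))
            : ↥(idealPowClosure M (n+1))) : A)
          = ∑ I : {I : Fin k →₀ ℕ // dg I = n+1}, c I • T t I.1 := by
      intro c
      rw [← Submodule.subtype_apply, map_sum]
      simp
    -- a sum identity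
    have hsum_eq : ∀ R : MvPolynomial (Fin k) ℂ, (∀ J ∈ R.support, dg J = n+1) →
        MvPolynomial.aeval t R = ∑ I : {I : Fin k →₀ ℕ // dg I = n+1}, coeff I.1 R • T t I.1 := by
      intro R hR
      rw [aeval_eq_sum_T t R (Finset.univ.map (Function.Embedding.subtype (fun I => dg I = n+1)))
        (fun J hJ => by
          simp only [Finset.mem_map, Function.Embedding.coe_subtype, Finset.mem_univ]
          exact ⟨⟨J, hR J hJ⟩, by simp⟩)]
      rw [Finset.sum_map]
      rfl
    -- spanning
    have hspan : ⊤ ≤ Submodule.span ℂ (Set.range g) := by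
      rintro v -
      obtain ⟨⟨x, hx⟩, rfl⟩ := Submodule.Quotient.mk_surjective _ v
      obtain ⟨R, hRdeg, hRQ⟩ := span_top hdense ht (n+1) x
      obtain ⟨R₀, R₁, hRsum, hR₀deg, hR₀coeff, hR₁supp⟩ := exists_split R n
      have hR₁mem : MvPolynomial.aeval t R₁ ∈ M ^ (n+1) := aeval_mem_pow ht R₁ (n+1) hR₁supp
      have hR₀Q : MvPolynomial.aeval t R₀ ∈ idealPowClosure M (n+1) := by
        have : MvPolynomial.aeval t R₀ =
            x - (x - MvPolynomial.aeval t R) - MvPolynomial.aeval t R₁ := by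
          rw [hRsum, map_add]; ring
        rw [this]
        exact Submodule.sub_mem _ (Submodule.sub_mem _ hx (Q_antitone (Nat.le_succ _) hRQ))
          (mem_Q_of_pow hR₁mem le_rfl)
      have hR₀0 : R₀ = 0 := ihU R₀ hR₀deg hR₀Q
      have hR₁supp' : ∀ J ∈ R₁.support, dg J = n+1 := by
        intro J hJ
        refine le_antisymm ?_ (hR₁supp J hJ)
        have : dg J ≤ R₁.totalDegree := le_totalDegree hJ
        have hR₁deg : R₁.totalDegree ≤ n+1 := by
          have : R₁ = R := by rw [hRsum, hR₀0, zero_add]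
          rw [this]; exact hRdeg
        exact le_trans ‹dg J ≤ R₁.totalDegree› hR₁deg
      have hxR₁ : x - MvPolynomial.aeval t R₁ ∈ idealPowClosure M (n+2) := by
        have : x - MvPolynomial.aeval t R₁ = x - MvPolynomial.aeval t R := by
          rw [hRsum, hR₀0, zero_add]
        rw [this]; exact hRQ
      have key : Submodule.Quotient.mk (p := GrN) ⟨x, hx⟩ =
          ∑ I : {I : Fin k →₀ ℕ // dg I = n+1}, coeff I.1 R₁ • g I := by
        rw [hmkS, Submodule.Quotient.eq]
        rw [hGrN, Submodule.mem_comap]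
        have hval : ((⟨x, hx⟩ - ∑ I : {I : Fin k →₀ ℕ // dg I = n+1},
            coeff I.1 R₁ • (⟨T t I.1, hTmem I⟩ : ↥(idealPowClosure M (n+1)))
            : ↥(idealPowClosure M (n+1))) : A) = x - MvPolynomial.aeval t R₁ := by
          rw [hsum_eq R₁ hR₁supp']
          push_cast [hvalS]
          rfl
        rw [Submodule.subtype_apply, hval]
        exact hxR₁
      rw [key]
      exact Submodule.sum_mem _ fun I _ =>
        Submodule.smul_mem _ _ (Submodule.subset_span (Set.mem_range_self I))
    have hcard' : Fintype.card {I : Fin k →₀ ℕ // dg I = n+1} =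
        Module.finrank ℂ (↥(idealPowClosure M (n+1)) ⧸ GrN) := by rw [hcard, hfr]
    have hli : LinearIndependent ℂ g :=
      linearIndependent_of_top_le_span_of_card_eq_finrank hspan hcard'
    -- apply to P
    have hPsupp : ∀ J ∈ P.support, dg J = n+1 := by
      intro J hJ
      refine le_antisymm (le_trans (le_totalDegree hJ) hdeg) ?_
      by_contra hlt
      exact (MvPolynomial.mem_support_iff.mp hJ) (hlow J (Nat.lt_succ_iff.mp (Nat.not_le.mp hlt)))
    have hPQmem : MvPolynomial.aeval t P ∈ idealPowClosure M (n+1) :=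
      Q_antitone (Nat.le_succ _) hQ
    have hzero : ∑ I : {I : Fin k →₀ ℕ // dg I = n+1}, coeff I.1 P • g I = 0 := by
      rw [hmkS, Submodule.Quotient.mk_eq_zero, hGrN, Submodule.mem_comap,
        Submodule.subtype_apply]
      have hval : ((∑ I : {I : Fin k →₀ ℕ // dg I = n+1},
          coeff I.1 P • (⟨T t I.1, hTmem I⟩ : ↥(idealPowClosure M (n+1)))
          : ↥(idealPowClosure M (n+1))) : A) = MvPolynomial.aeval t P := by
        rw [hsum_eq P hPsupp]; exact hvalS _
      rw [hval]
      exact hQ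
    have hall : ∀ I : {I : Fin k →₀ ℕ // dg I = n+1}, coeff I.1 P = 0 := by
      have := linearIndependent_iff'.mp hli Finset.univ (fun I => coeff I.1 P) hzero
      exact fun I => this I (Finset.mem_univ I)
    ext J
    rw [MvPolynomial.coeff_zero]
    by_cases hJ : dg J ≤ n
    · exact hlow J hJ
    · by_cases hJ' : dg J = n+1
      · exact hall ⟨J, hJ'⟩
      · by_contra hc
        exact hc (by
          refine coeff_eq_zero_of_totalDegree_lt ?_
          have h1 : n + 1 < dg J := by omega
          calc P.totalDegree ≤ n + 1 := hdeg
            _ < dg J := h1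
            _ = ∑ i ∈ J.support, J i := rfl)

end Top
end Frechet26

open Frechet26


set_option maxHeartbeats 1000000

/-- Corollary 2.6: let `A` be a Fréchet algebra in which the polynomials in the identity and
elements `t₁, …, t_k` are dense (i.e. the subalgebra generated by `t₁, …, t_k` is dense),
and let `M` be a closed maximal ideal containing `t₁, …, t_k` with
`dim (cl(Mⁿ)/cl(Mⁿ⁺¹)) = C(n+k-1, n)` for all `n ≥ 1`. Then `A / ⋂_{n≥1} cl(Mⁿ)` is a
Fréchet algebra of power series in `k` variables: there is an injective unital `ℂ`-algebra
homomorphism into `ℂ[[X₁,…,X_k]]` whose range contains the indeterminates and whose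
coefficient functionals are continuous for the quotient topology. -/
theorem frechet_corollary26
    {A : Type*} [CommRing A] [Algebra ℂ A] [UniformSpace A] [IsUniformAddGroup A]
    [ContinuousMul A] [ContinuousSMul ℂ A] [CompleteSpace A]
    (p : ℕ → Seminorm ℂ A) (hmono : Monotone p)
    (hsubmul : ∀ (m : ℕ) (x y : A), p m (x * y) ≤ p m x * p m y)
    (hws : WithSeminorms p)
    (k : ℕ) (t : Fin k → A)
    (hdense : Dense ((Algebra.adjoin ℂ (Set.range t) : Subalgebra ℂ A) : Set A))
    (M : Ideal A) (hclosed : IsClosed (M : Set A)) (hmax : M.IsMaximal)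
    (ht : ∀ i, t i ∈ M)
    (hdim : ∀ n : ℕ, 1 ≤ n →
      Module.rank ℂ
        (↥(idealPowClosure M n) ⧸
          Submodule.comap (idealPowClosure M n).subtype (idealPowClosure M (n + 1)))
        = ((n + k - 1).choose n : Cardinal)) :
    ∃ Ψ : (A ⧸ capClosure M) →ₐ[ℂ] MvPowerSeries (Fin k) ℂ,
      Function.Injective Ψ ∧
      (∀ i : Fin k, MvPowerSeries.X i ∈ Set.range Ψ) ∧
      (∀ I : Fin k →₀ ℕ,
        Continuous fun b : A ⧸ capClosure M => MvPowerSeries.coeff I (Ψ b)) := by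
  classical
  have hU := uniq hclosed hmax ht hdense hdim
  -- the linear equivalences θ n
  set τ : ∀ n : ℕ, (restrictTotalDegree (Fin k) ℂ n) →ₗ[ℂ] (A ⧸ idealPowClosure M (n+1)) :=
    fun n => (idealPowClosure M (n+1)).mkQ.comp
      ((MvPolynomial.aeval t).toLinearMap.comp (restrictTotalDegree (Fin k) ℂ n).subtype)
    with hτ
  have hbij : ∀ n, Function.Bijective (τ n) := by
    intro n
    constructor
    · rw [← LinearMap.ker_eq_bot, Submodule.eq_bot_iff]
      rintro ⟨P, hP⟩ hker
      have h0 : MvPolynomial.aeval t P ∈ idealPowClosure M (n+1) := by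
        have := (Submodule.Quotient.mk_eq_zero _).mp hker
        exact this
      exact Subtype.ext (hU n P ((mem_restrictTotalDegree _ _ _).mp hP) h0)
    · intro y
      obtain ⟨x, rfl⟩ := Submodule.Quotient.mk_surjective _ y
      obtain ⟨P, hPdeg, hPQ⟩ := span_top hdense ht n x
      refine ⟨⟨P, (mem_restrictTotalDegree _ _ _).mpr hPdeg⟩, ?_⟩
      show Submodule.Quotient.mk (MvPolynomial.aeval t P) = Submodule.Quotient.mk x
      rw [Submodule.Quotient.eq]
      simpa [neg_sub] using Submodule.neg_mem _ hPQ
  set θ : ∀ n : ℕ, (restrictTotalDegree (Fin k) ℂ n) ≃ₗ[ℂ] (A ⧸ idealPowClosure M (n+1)) :=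
    fun n => LinearEquiv.ofBijective (τ n) (hbij n) with hθ
  set s : ℕ → A → MvPolynomial (Fin k) ℂ :=
    fun n x => ((θ n).symm ((idealPowClosure M (n+1)).mkQ x) : _) with hs
  -- characterization of s
  have hchar : ∀ n (x : A), (s n x).totalDegree ≤ n ∧
      x - MvPolynomial.aeval t (s n x) ∈ idealPowClosure M (n+1) := by
    intro n x
    constructor
    · exact (mem_restrictTotalDegree _ _ _).mp ((θ n).symm ((idealPowClosure M (n+1)).mkQ x)).2
    · have happ := (θ n).apply_symm_apply ((idealPowClosure M (n+1)).mkQ x)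
      have : Submodule.Quotient.mk (p := idealPowClosure M (n+1))
          (MvPolynomial.aeval t (s n x)) = Submodule.Quotient.mk x := happ
      rw [Submodule.Quotient.eq] at this
      simpa using Submodule.neg_mem _ this
  have huniq : ∀ n (x : A) (P : MvPolynomial (Fin k) ℂ), P.totalDegree ≤ n →
      x - MvPolynomial.aeval t P ∈ idealPowClosure M (n+1) → s n x = P := by
    intro n x P hdeg hQ
    have h1 : τ n ⟨P, (mem_restrictTotalDegree _ _ _).mpr hdeg⟩ =
        (idealPowClosure M (n+1)).mkQ x := by
      show Submodule.Quotient.mk (MvPolynomial.aeval t P) = Submodule.Quotient.mk x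
      rw [Submodule.Quotient.eq]
      simpa [neg_sub] using Submodule.neg_mem _ hQ
    have h2 := (θ n).symm_apply_apply ⟨P, (mem_restrictTotalDegree _ _ _).mpr hdeg⟩
    have h3 : (θ n) ⟨P, (mem_restrictTotalDegree _ _ _).mpr hdeg⟩ =
        (idealPowClosure M (n+1)).mkQ x := h1
    show Subtype.val ((θ n).symm ((idealPowClosure M (n+1)).mkQ x)) = P
    rw [← h3, h2]
  -- consistency
  have hstep : ∀ n (x : A) (I : Fin k →₀ ℕ), dg I ≤ n →
      coeff I (s (n+1) x) = coeff I (s n x) := by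
    intro n x I hI
    obtain ⟨P₀, P₁, hsum, hP₀deg, hP₀coeff, hP₁supp⟩ := exists_split (s (n+1) x) n
    have hQ : x - MvPolynomial.aeval t P₀ ∈ idealPowClosure M (n+1) := by
      have h1 := (hchar (n+1) x).2
      have h2 : MvPolynomial.aeval t P₁ ∈ idealPowClosure M (n+1) :=
        mem_Q_of_pow (aeval_mem_pow ht P₁ (n+1) hP₁supp) le_rfl
      have : x - MvPolynomial.aeval t P₀ =
          (x - MvPolynomial.aeval t (s (n+1) x)) + MvPolynomial.aeval t P₁ := by
        rw [hsum, map_add]; ring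
      rw [this]
      exact Submodule.add_mem _ (Q_antitone (Nat.le_succ _) h1) h2
    rw [huniq n x P₀ hP₀deg hQ, hP₀coeff I hI]
  have hcons : ∀ (I : Fin k →₀ ℕ) (n : ℕ), dg I ≤ n → ∀ x : A,
      coeff I (s n x) = coeff I (s (dg I) x) := by
    intro I n hn
    induction n, hn using Nat.le_induction with
    | base => intro x; rfl
    | succ n hn ih => intro x; rw [hstep n x I hn, ih x]
  -- the coefficient functions are continuous on A
  have hcont : ∀ I : Fin k →₀ ℕ, Continuous (fun x : A => coeff I (s (dg I) x)) := by
    intro I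
    set n := dg I with hn
    haveI : IsClosed ((idealPowClosure M (n+1) : Submodule ℂ A) : Set A) := Q_isClosed _
    haveI : FiniteDimensional ℂ (A ⧸ (idealPowClosure M (n+1) : Submodule ℂ A)) :=
      Module.Finite.equiv (θ n)
    set ℓ : (A ⧸ (idealPowClosure M (n+1) : Submodule ℂ A)) →ₗ[ℂ] ℂ :=
      (MvPolynomial.lcoeff ℂ I).comp
        (((restrictTotalDegree (Fin k) ℂ n).subtype).comp ((θ n).symm : _ →ₗ[ℂ] _)) with hℓ
    have heq : (fun x : A => coeff I (s n x)) = ℓ ∘ (idealPowClosure M (n+1)).mkQ := rfl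
    rw [heq]
    exact ℓ.continuous_of_finiteDimensional.comp
      (idealPowClosure M (n+1)).isOpenQuotientMap_mkQ.continuous
  -- build the power series map
  set Ψ₀ : A → MvPowerSeries (Fin k) ℂ := fun x I => coeff I (s (dg I) x) with hΨ₀
  have hcoeff : ∀ (I : Fin k →₀ ℕ) (x : A),
      MvPowerSeries.coeff I (Ψ₀ x) = coeff I (s (dg I) x) := fun I x => rfl
  -- algebra hom properties
  have hone : Ψ₀ 1 = 1 := by
    apply MvPowerSeries.ext
    intro I
    rw [hcoeff]
    have h1 : s (dg I) 1 = 1 := huniq _ _ _ (le_of_eq_of_le totalDegree_one (Nat.zero_le _))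
      (by rw [map_one, sub_self]; exact Submodule.zero_mem _)
    rw [h1, MvPowerSeries.coeff_one, MvPolynomial.coeff_one]
    simp [eq_comm]
  have hadd : ∀ x y, Ψ₀ (x + y) = Ψ₀ x + Ψ₀ y := by
    intro x y
    apply MvPowerSeries.ext
    intro I
    rw [map_add, hcoeff, hcoeff, hcoeff]
    have h1 : s (dg I) (x + y) = s (dg I) x + s (dg I) y := by
      refine huniq _ _ _ (le_trans (totalDegree_add _ _) (max_le (hchar _ x).1 (hchar _ y).1)) ?_
      have : x + y - MvPolynomial.aeval t (s (dg I) x + s (dg I) y) =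
          (x - MvPolynomial.aeval t (s (dg I) x)) + (y - MvPolynomial.aeval t (s (dg I) y)) := by
        rw [map_add]; ring
      rw [this]
      exact Submodule.add_mem _ (hchar _ x).2 (hchar _ y).2
    rw [h1, MvPolynomial.coeff_add]
  have hzero : Ψ₀ 0 = 0 := by
    apply MvPowerSeries.ext
    intro I
    rw [hcoeff]
    have h1 : s (dg I) 0 = 0 := huniq _ _ _ (le_of_eq_of_le totalDegree_zero (Nat.zero_le _))
      (by rw [map_zero, sub_self]; exact Submodule.zero_mem _)
    rw [h1]
    simp
  have hmul : ∀ x y, Ψ₀ (x * y) = Ψ₀ x * Ψ₀ y := by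
    intro x y
    apply MvPowerSeries.ext
    intro I
    set n := dg I with hn
    set P := s n x with hP
    set Qp := s n y with hQp
    have hxy : x * y - MvPolynomial.aeval t (P * Qp) ∈ idealPowClosure M (n+1) := by
      have : x * y - MvPolynomial.aeval t (P * Qp) =
          x * (y - MvPolynomial.aeval t Qp) +
          (MvPolynomial.aeval t Qp) * (x - MvPolynomial.aeval t P) := by
        rw [map_mul]; ring
      rw [this]
      exact Submodule.add_mem _ (mul_mem_Q x (hchar n y).2) (mul_mem_Q _ (hchar n x).2)
    obtain ⟨S₀, S₁, hSsum, hS₀deg, hS₀coeff, hS₁supp⟩ := exists_split (P * Qp) n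
    have hS : s n (x * y) = S₀ := by
      refine huniq _ _ _ hS₀deg ?_
      have h2 : MvPolynomial.aeval t S₁ ∈ idealPowClosure M (n+1) :=
        mem_Q_of_pow (aeval_mem_pow ht S₁ (n+1) hS₁supp) le_rfl
      have : x * y - MvPolynomial.aeval t S₀ =
          (x * y - MvPolynomial.aeval t (P * Qp)) + MvPolynomial.aeval t S₁ := by
        rw [hSsum, map_add]; ring
      rw [this]
      exact Submodule.add_mem _ hxy h2
    rw [MvPowerSeries.coeff_mul, hcoeff, hS, hS₀coeff I le_rfl, MvPolynomial.coeff_mul]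
    refine Finset.sum_congr rfl ?_
    rintro ⟨J, J'⟩ hJJ
    rw [Finset.HasAntidiagonal.mem_antidiagonal] at hJJ
    have hdgJ : dg J ≤ n := by
      rw [hn, ← hJJ, dg_add]; exact Nat.le_add_right _ _
    have hdgJ' : dg J' ≤ n := by
      rw [hn, ← hJJ, dg_add]; exact Nat.le_add_left _ _
    have e1 : MvPowerSeries.coeff J (Ψ₀ x) = coeff J P := by
      rw [hcoeff, hP, ← hcons J n hdgJ x]
    have e2 : MvPowerSeries.coeff J' (Ψ₀ y) = coeff J' Qp := by
      rw [hcoeff, hQp, ← hcons J' n hdgJ' y]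
    rw [e1, e2]
  have hsmul : ∀ (c : ℂ) (x : A), Ψ₀ (c • x) = c • Ψ₀ x := by
    intro c x
    apply MvPowerSeries.ext
    intro I
    rw [map_smul, hcoeff, hcoeff]
    have h1 : s (dg I) (c • x) = c • s (dg I) x := by
      refine huniq _ _ _ (le_trans (totalDegree_smul_le _ _) (hchar _ x).1) ?_
      have : c • x - MvPolynomial.aeval t (c • s (dg I) x) =
          c • (x - MvPolynomial.aeval t (s (dg I) x)) := by
        rw [map_smul, smul_sub]
      rw [this]
      exact Submodule.smul_mem _ _ (hchar _ x).2
    rw [h1, MvPolynomial.coeff_smul]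
  have hcommutes : ∀ c : ℂ, Ψ₀ (algebraMap ℂ A c) = algebraMap ℂ (MvPowerSeries (Fin k) ℂ) c := by
    intro c
    have : algebraMap ℂ A c = c • (1 : A) := Algebra.algebraMap_eq_smul_one c
    rw [this, hsmul, hone]
    rw [Algebra.algebraMap_eq_smul_one]
  set Ψa : A →ₐ[ℂ] MvPowerSeries (Fin k) ℂ :=
    { toFun := Ψ₀
      map_one' := hone
      map_mul' := hmul
      map_zero' := hzero
      map_add' := hadd
      commutes' := hcommutes } with hΨa
  -- kernel
  have hker : ∀ x : A, Ψ₀ x = 0 ↔ x ∈ capClosure M := by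
    intro x
    have hcap : x ∈ capClosure M ↔ ∀ n : ℕ, x ∈ idealPowClosure M (n+1) :=
      Submodule.mem_iInf _
    rw [hcap]
    constructor
    · intro h n
      have hsn : s n x = 0 := by
        apply MvPolynomial.ext
        intro I
        rw [MvPolynomial.coeff_zero]
        by_cases hI : dg I ≤ n
        · rw [hcons I n hI x]
          have := congrFun h I
          exact this
        · refine coeff_eq_zero_of_totalDegree_lt (lt_of_le_of_lt (hchar n x).1 ?_)
          exact lt_of_lt_of_le (Nat.not_le.mp hI) (le_of_eq rfl)
      have := (hchar n x).2
      rwa [hsn, map_zero, sub_zero] at this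
    · intro h
      apply MvPowerSeries.ext
      intro I
      rw [hcoeff]
      have hsI : s (dg I) x = 0 := huniq _ _ _
        (le_of_eq_of_le totalDegree_zero (Nat.zero_le _))
        (by rw [map_zero, sub_zero]; exact h (dg I))
      rw [hsI]
      simp
  have hker0 : ∀ a ∈ capClosure M, Ψa a = 0 := fun a ha => (hker a).mpr ha
  refine ⟨Ideal.Quotient.liftₐ (capClosure M) Ψa hker0, ?_, ?_, ?_⟩
  · -- injective
    intro a b hab
    obtain ⟨x, rfl⟩ := Ideal.Quotient.mk_surjective a
    obtain ⟨y, rfl⟩ := Ideal.Quotient.mk_surjective b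
    change Ψ₀ x = Ψ₀ y at hab
    rw [Ideal.Quotient.eq]
    rw [← hker]
    show Ψ₀ (x - y) = 0
    have hsub : Ψ₀ (x - y) = Ψ₀ x - Ψ₀ y := map_sub Ψa x y
    have hab' : Ψ₀ x = Ψ₀ y := hab
    rw [hsub, hab', sub_self]
  · -- X i in range
    intro i
    refine ⟨Ideal.Quotient.mk (capClosure M) (t i), ?_⟩
    show Ψ₀ (t i) = MvPowerSeries.X i
    apply MvPowerSeries.ext
    intro I
    rw [hcoeff, MvPowerSeries.coeff_X]
    by_cases hI : dg I = 0
    · have hI0 : I = 0 := by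
        ext j
        by_contra hj
        have hmem : j ∈ I.support := Finsupp.mem_support_iff.mpr hj
        have : 0 < dg I := lt_of_lt_of_le (Nat.pos_of_ne_zero hj)
          (Finset.single_le_sum (f := fun a => I a) (fun _ _ => Nat.zero_le _) hmem)
        omega
      have hs0 : s (dg I) (t i) = 0 := huniq _ _ _
        (le_of_eq_of_le totalDegree_zero (Nat.zero_le _))
        (by
          rw [map_zero, sub_zero, hI]
          exact mem_Q_of_pow ((pow_one M).symm ▸ ht i) le_rfl)
      rw [hs0, MvPolynomial.coeff_zero, hI0, if_neg (by
        intro hc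
        exact (one_ne_zero : (1:ℕ) ≠ 0) (Finsupp.single_eq_zero.mp hc.symm))]
    · have hsX : s (dg I) (t i) = MvPolynomial.X i := huniq _ _ _
        (le_of_eq_of_le (totalDegree_X i) (Nat.one_le_iff_ne_zero.mpr hI))
        (by rw [MvPolynomial.aeval_X, sub_self]; exact Submodule.zero_mem _)
      rw [hsX, MvPolynomial.coeff_X']
      by_cases h : Finsupp.single i 1 = I
      · rw [if_pos h, if_pos h.symm]
      · rw [if_neg h, if_neg (fun hc => h hc.symm)]
  · -- continuity
    intro I
    have hq : IsOpenQuotientMap (capClosure M).mkQ :=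
      Submodule.isOpenQuotientMap_mkQ _
    rw [← hq.continuous_comp_iff]
    have heq : (fun b : A ⧸ capClosure M => MvPowerSeries.coeff I
        ((Ideal.Quotient.liftₐ (capClosure M) Ψa hker0) b)) ∘ (capClosure M).mkQ =
        fun x : A => coeff I (s (dg I) x) := by
      funext x
      show MvPowerSeries.coeff I ((Ideal.Quotient.liftₐ (capClosure M) Ψa hker0)
        (Ideal.Quotient.mk (capClosure M) x)) = _
      rfl
    rw [heq]
    exact hcont I
end
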